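/- arXiv:1602.00605 — 2 statements merged into one kernel-verified Lean document; each statement's English description precedes it below -/
import Mathlib

section
/- Let κ be an uncountable cardinal with κ^{<κ} = κ. There exists a club C_EF ⊆ κ such that for every α ∈ C_EF, the binary relation on structures with domain κ (in a countable relational vocabulary) defined by '(𝒜,ℬ) is in the relation iff player II has a winning strategy in EF^α_ω(𝒜↾α, ℬ↾α)' is an equivalence relation. -/
noncomputable section

open Cardinal Set FirstOrder

namespace GenCantor

/-- The set of ordinals below `κ`, used as the domain `κ` of coded structures. -/
abbrev O (κ : Cardinal.{0}) : Type 1 := ↥(Set.Iio κ.ord)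

/-- The generalized Cantor space `2^κ`. -/
abbrev Point (κ : Cardinal.{0}) : Type 1 := O κ → Bool

/-- `C` is a club (closed and unbounded) subset of `κ`. -/
def IsClub (κ : Cardinal.{0}) (C : Set Ordinal) : Prop :=
  C ⊆ Set.Iio κ.ord ∧
  (∀ α < κ.ord, ∃ β ∈ C, α ≤ β) ∧
  (∀ α, α ≠ 0 → α < κ.ord → (∀ β < α, ∃ γ ∈ C, β < γ ∧ γ < α) → α ∈ C)

/-- `S` is a stationary subset of `κ`: it meets every club. -/
def IsStationary (κ : Cardinal.{0}) (S : Set Ordinal) : Prop :=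
  ∀ C, IsClub κ C → (S ∩ C).Nonempty

variable {L : FirstOrder.Language}

/-- `p` is a partial isomorphism between the (relational) structures `A` and `B`:
a partial injective function preserving all relations in both directions. -/
def IsPartialIso (κ : Cardinal.{0}) (A B : L.Structure (O κ)) (p : Set (O κ × O κ)) : Prop :=
  (∀ x y y', (x, y) ∈ p → (x, y') ∈ p → y = y') ∧
  (∀ x x' y, (x, y) ∈ p → (x', y) ∈ p → x = x') ∧
  ∀ (n : ℕ) (R : L.Relations n) (a b : Fin n → O κ),
    (∀ i, (a i, b i) ∈ p) →
      (@FirstOrder.Language.Structure.RelMap L (O κ) A n R a ↔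
        @FirstOrder.Language.Structure.RelMap L (O κ) B n R b)

/-- A legal move of player I in `EF^α_ω`: a subset of `α` of size `< κ`
extending the previous move. -/
def LegalI (κ : Cardinal.{0}) (α : Ordinal) (prev now : Set (O κ)) : Prop :=
  (∀ x ∈ now, (x : Ordinal) < α) ∧ Cardinal.mk ↥now < Cardinal.lift.{1} κ ∧ prev ⊆ now

/-- A legal move of player II in `EF^α_ω` responding to the move `X` of player I:
a partial function `⊆ α × α` of size `< κ` extending the previous move, whose domain and
range contain `X`. -/
def LegalII (κ : Cardinal.{0}) (α : Ordinal) (X : Set (O κ))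
    (prev now : Set (O κ × O κ)) : Prop :=
  (∀ q ∈ now, (q.1 : Ordinal) < α ∧ (q.2 : Ordinal) < α) ∧
  Cardinal.mk ↥now < Cardinal.lift.{1} κ ∧
  prev ⊆ now ∧
  (∀ x y y', (x, y) ∈ now → (x, y') ∈ now → y = y') ∧
  ∀ x ∈ X, (∃ y, (x, y) ∈ now) ∧ (∃ y, (y, x) ∈ now)

/-- Player II has a winning strategy in the game `EF^α_ω (A↾α, B↾α)`:
a strategy `σ` (a function of the sequence of moves of player I so far) such that in
every play in which player I moves legally, all of II's moves are legal and the union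
of II's moves is a partial isomorphism. -/
def IIWinsEF (κ : Cardinal.{0}) (α : Ordinal) (A B : L.Structure (O κ)) : Prop :=
  ∃ σ : List (Set (O κ)) → Set (O κ × O κ),
    ∀ x : ℕ → Set (O κ),
      (∀ n, LegalI κ α (if n = 0 then ∅ else x (n - 1)) (x n)) →
      (∀ n, LegalII κ α (x n)
          (if n = 0 then ∅ else σ ((List.range n).map x))
          (σ ((List.range (n + 1)).map x))) ∧
      IsPartialIso κ A B (⋃ n, σ ((List.range (n + 1)).map x))

/-- Player I has a winning strategy in the game `EF^α_ω (A↾α, B↾α)`: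
a strategy `τ` (a function of the sequence of moves of player II so far) whose moves are
legal as long as player II has moved legally, and such that in every play in which
player II moves legally the union of II's moves is not a partial isomorphism. -/
def IWinsEF (κ : Cardinal.{0}) (α : Ordinal) (A B : L.Structure (O κ)) : Prop :=
  ∃ τ : List (Set (O κ × O κ)) → Set (O κ),
    (∀ (y : ℕ → Set (O κ × O κ)) (n : ℕ),
      (∀ m < n, LegalII κ α (τ ((List.range m).map y))
          (if m = 0 then ∅ else y (m - 1)) (y m)) →
      LegalI κ α (if n = 0 then ∅ else τ ((List.range (n - 1)).map y))
        (τ ((List.range n).map y))) ∧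
    ∀ y : ℕ → Set (O κ × O κ),
      (∀ n, LegalII κ α (τ ((List.range n).map y))
          (if n = 0 then ∅ else y (n - 1)) (y n)) →
      ¬ IsPartialIso κ A B (⋃ n, y n)

/-! ### Auxiliary machinery for the proof -/

section AuxLemmas

variable {κ : Cardinal.{0}}

lemma aleph0_lt_liftκ (hκ₁ : ℵ₀ < κ) : (ℵ₀ : Cardinal.{1}) < Cardinal.lift.{1} κ := by
  rw [← Cardinal.lift_aleph0.{1,0}]; exact Cardinal.lift_lt.mpr hκ₁

lemma mk_union_lt {X : Type 1} (hκ₁ : ℵ₀ < κ) {s t : Set X}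
    (hs : Cardinal.mk ↥s < Cardinal.lift.{1} κ) (ht : Cardinal.mk ↥t < Cardinal.lift.{1} κ) :
    Cardinal.mk ↥(s ∪ t) < Cardinal.lift.{1} κ :=
  lt_of_le_of_lt (Cardinal.mk_union_le s t)
    (Cardinal.add_lt_of_lt (aleph0_lt_liftκ hκ₁).le hs ht)

lemma mk_empty_lt {X : Type 1} (hκ₁ : ℵ₀ < κ) :
    Cardinal.mk ↥(∅ : Set X) < Cardinal.lift.{1} κ := by
  rw [Cardinal.mk_emptyCollection]
  exact lt_trans Cardinal.aleph0_pos (aleph0_lt_liftκ hκ₁)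

/-- The set of elements appearing as a coordinate of a pair in `p` (domain union range). -/
def drp {κ : Cardinal.{0}} (p : Set (O κ × O κ)) : Set (O κ) :=
  Prod.fst '' p ∪ Prod.snd '' p

lemma mem_drp_left {p : Set (O κ × O κ)} {a b : O κ} (h : (a, b) ∈ p) : a ∈ drp p :=
  Or.inl ⟨(a, b), h, rfl⟩

lemma mem_drp_right {p : Set (O κ × O κ)} {a b : O κ} (h : (a, b) ∈ p) : b ∈ drp p :=
  Or.inr ⟨(a, b), h, rfl⟩

lemma mk_drp_lt (hκ₁ : ℵ₀ < κ) {p : Set (O κ × O κ)}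
    (hp : Cardinal.mk ↥p < Cardinal.lift.{1} κ) :
    Cardinal.mk ↥(drp p) < Cardinal.lift.{1} κ :=
  mk_union_lt hκ₁ (lt_of_le_of_lt Cardinal.mk_image_le hp)
    (lt_of_le_of_lt Cardinal.mk_image_le hp)

/-- Composition of partial binary relations (as sets of pairs). -/
def pcomp {κ : Cardinal.{0}} (G F : Set (O κ × O κ)) : Set (O κ × O κ) :=
  {q | ∃ b, (q.1, b) ∈ F ∧ (b, q.2) ∈ G}

lemma pcomp_mono {G G' F F' : Set (O κ × O κ)} (hG : G ⊆ G') (hF : F ⊆ F') :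
    pcomp G F ⊆ pcomp G' F' := by
  rintro q ⟨b, h1, h2⟩; exact ⟨b, hF h1, hG h2⟩

lemma mk_pcomp_lt (hκ₁ : ℵ₀ < κ) {G F : Set (O κ × O κ)}
    (hF : Cardinal.mk ↥F < Cardinal.lift.{1} κ)
    (hG : ∀ x y y', (x, y) ∈ G → (x, y') ∈ G → y = y') :
    Cardinal.mk ↥(pcomp G F) < Cardinal.lift.{1} κ := by
  refine lt_of_le_of_lt (Cardinal.mk_le_of_injective
    (f := fun q : ↥(pcomp G F) => (⟨(q.1.1, q.2.choose), q.2.choose_spec.1⟩ : ↥F)) ?_) hF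
  rintro ⟨q, hq⟩ ⟨r, hr⟩ h
  have hh : (q.1, hq.choose) = (r.1, hr.choose) := Subtype.ext_iff.mp h
  obtain ⟨h1, h2⟩ := Prod.mk.inj hh
  have h3 : q.2 = r.2 :=
    hG hq.choose q.2 r.2 hq.choose_spec.2 (h2 ▸ hr.choose_spec.2)
  exact Subtype.ext (Prod.ext h1 h3)

end AuxLemmas

section EFEquiv

variable {κ : Cardinal.{0}} {L : FirstOrder.Language} {α : Ordinal}

/-- Reflexivity of the EF-equivalence: player II wins by copying. -/
lemma IIWinsEF_refl (hκ₁ : ℵ₀ < κ) (α : Ordinal) (A : L.Structure (O κ)) :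
    IIWinsEF κ α A A := by
  refine ⟨fun l => {p | p.1 = p.2 ∧ ∃ s ∈ l, p.1 ∈ s}, fun xs hxs => ?_⟩
  have hmono : ∀ j n, j ≤ n → xs j ⊆ xs n := by
    intro j n hjn
    induction n with
    | zero => rw [Nat.le_zero.mp hjn]
    | succ n ih =>
      rcases Nat.lt_or_ge j (n + 1) with h | h
      · have step : xs n ⊆ xs (n + 1) := by
          have := (hxs (n + 1)).2.2
          simpa using this
        exact (ih (Nat.lt_succ_iff.mp h)).trans step
      · rw [le_antisymm hjn h]
  have key : ∀ n, {p : O κ × O κ | p.1 = p.2 ∧ ∃ s ∈ (List.range (n + 1)).map xs, p.1 ∈ s}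
      = {p : O κ × O κ | p.1 = p.2 ∧ p.1 ∈ xs n} := by
    intro n
    ext p
    constructor
    · rintro ⟨h1, s, hs, hps⟩
      obtain ⟨j, hj, rfl⟩ := List.mem_map.mp hs
      exact ⟨h1, hmono j n (Nat.lt_succ_iff.mp (List.mem_range.mp hj)) hps⟩
    · rintro ⟨h1, h2⟩
      exact ⟨h1, xs n, List.mem_map.mpr ⟨n, List.mem_range.mpr (Nat.lt_succ_self n), rfl⟩, h2⟩
  constructor
  · intro n
    beta_reduce
    rw [key n]
    refine ⟨?_, ?_, ?_, ?_, ?_⟩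
    · rintro q ⟨h1, h2⟩
      exact ⟨(hxs n).1 q.1 h2, h1 ▸ (hxs n).1 q.1 h2⟩
    · refine lt_of_le_of_lt (Cardinal.mk_le_of_injective
        (f := fun q : ↥{p : O κ × O κ | p.1 = p.2 ∧ p.1 ∈ xs n} =>
          (⟨q.1.1, q.2.2⟩ : ↥(xs n))) ?_) (hxs n).2.1
      rintro ⟨⟨a, b⟩, hab⟩ ⟨⟨c, d⟩, hcd⟩ h
      have h1 : a = c := congrArg Subtype.val h
      have e1 : a = b := hab.1
      have e2 : c = d := hcd.1
      have h2 : b = d := e1.symm.trans (h1.trans e2)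
      simp [h1, h2]
    · cases n with
      | zero => simp
      | succ n =>
        simp only [Nat.succ_ne_zero, if_false]
        rintro q ⟨h1, s, hs, hps⟩
        obtain ⟨j, hj, rfl⟩ := List.mem_map.mp hs
        exact ⟨h1, hmono j (n + 1) (Nat.le_of_lt_succ (Nat.lt_succ_of_lt (List.mem_range.mp hj))) hps⟩
    · rintro x y y' ⟨h1, _⟩ ⟨h2, _⟩
      exact h1.symm.trans h2
    · intro x hx
      exact ⟨⟨x, rfl, hx⟩, ⟨x, rfl, hx⟩⟩
  · refine ⟨?_, ?_, ?_⟩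
    · rintro x y y' hy hy'
      obtain ⟨_, h1, _⟩ := Set.mem_iUnion.mp hy
      obtain ⟨_, h2, _⟩ := Set.mem_iUnion.mp hy'
      exact h1.symm.trans h2
    · rintro x x' y hx hx'
      obtain ⟨_, h1, _⟩ := Set.mem_iUnion.mp hx
      obtain ⟨_, h2, _⟩ := Set.mem_iUnion.mp hx'
      exact h1.trans h2.symm
    · intro n R a b hab
      have : a = b := funext fun i => by
        obtain ⟨_, h, _⟩ := Set.mem_iUnion.mp (hab i)
        exact h
      rw [this]

/-- Symmetry of the EF-equivalence: player II wins by swapping. -/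
lemma IIWinsEF_symm {A B : L.Structure (O κ)} (h : IIWinsEF κ α A B) : IIWinsEF κ α B A := by
  obtain ⟨σ, hσ⟩ := h
  refine ⟨fun l => Prod.swap '' σ l, fun xs hxs => ?_⟩
  obtain ⟨hleg, hiso⟩ := hσ xs hxs
  have hsub : ∀ n, σ ((List.range (n + 1)).map xs) ⊆ ⋃ m, σ ((List.range (m + 1)).map xs) :=
    fun n => Set.subset_iUnion (fun m => σ ((List.range (m + 1)).map xs)) n
  constructor
  · intro n
    refine ⟨?_, ?_, ?_, ?_, ?_⟩
    · rintro q ⟨r, hr, rfl⟩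
      exact ⟨((hleg n).1 r hr).2, ((hleg n).1 r hr).1⟩
    · exact lt_of_le_of_lt Cardinal.mk_image_le (hleg n).2.1
    · cases n with
      | zero => simp
      | succ n =>
        simp only [Nat.succ_ne_zero, if_false]
        refine Set.image_mono ?_
        have := (hleg (n + 1)).2.2.1
        simpa using this
    · rintro x y y' ⟨r, hr, hr'⟩ ⟨s, hs, hs'⟩
      have hr1 : (y, x) ∈ σ ((List.range (n + 1)).map xs) := by
        have hr2 : r = (y, x) := by have := congrArg Prod.swap hr'; simpa using this
        rwa [← hr2]
      have hs1 : (y', x) ∈ σ ((List.range (n + 1)).map xs) := by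
        have hs2 : s = (y', x) := by have := congrArg Prod.swap hs'; simpa using this
        rwa [← hs2]
      exact hiso.2.1 y y' x (hsub n hr1) (hsub n hs1)
    · intro x hx
      obtain ⟨⟨y, hy⟩, ⟨y', hy'⟩⟩ := (hleg n).2.2.2.2 x hx
      exact ⟨⟨y', ⟨(y', x), hy', rfl⟩⟩, ⟨y, ⟨(x, y), hy, rfl⟩⟩⟩
  · have hmem : ∀ {a b : O κ}, (a, b) ∈ (⋃ n, Prod.swap '' σ ((List.range (n + 1)).map xs)) →
        (b, a) ∈ ⋃ n, σ ((List.range (n + 1)).map xs) := by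
      intro a b hab
      obtain ⟨n, hn⟩ := Set.mem_iUnion.mp hab
      obtain ⟨r, hr, hr'⟩ := hn
      have hr2 : r = (b, a) := by have := congrArg Prod.swap hr'; simpa using this
      exact Set.mem_iUnion.mpr ⟨n, hr2 ▸ hr⟩
    refine ⟨?_, ?_, ?_⟩
    · intro x y y' hy hy'
      exact hiso.2.1 y y' x (hmem hy) (hmem hy')
    · intro x x' y hx hx'
      exact hiso.1 y x x' (hmem hx) (hmem hx')
    · intro n R a b hab
      exact (hiso.2.2 n R b a (fun i => hmem (hab i))).symm

section TransAux

variable {κ : Cardinal.{0}}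

lemma getD_concat_len {X : Type*} {l : List X} {k : ℕ} (h : l.length = k) (x d : X) :
    (l ++ [x]).getD k d = x := by
  subst h; simp [List.getD_eq_getElem?_getD]

lemma getD_append_lt {X : Type*} (l l' : List X) (d : X) (k : ℕ) (h : k < l.length) :
    (l ++ l').getD k d = l.getD k d :=
  List.getD_append l l' d k h

lemma map_range_succ {X : Type*} (f : ℕ → X) (n : ℕ) :
    (List.range (n + 1)).map f = (List.range n).map f ++ [f n] := by
  rw [List.range_succ, List.map_append]; try rfl

lemma map_range_split {X : Type*} (f : ℕ → X) {k m : ℕ} (h : k = m + 1) :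
    (List.range k).map f = (List.range m).map f ++ [f m] := by
  subst h; exact map_range_succ f m

lemma getLastD_map_range {X : Type*} (f : ℕ → X) {k m : ℕ} (h : m + 1 = k) (d : X) :
    ((List.range k).map f).getLastD d = f m := by
  subst h; rw [map_range_succ]; exact List.getLastD_concat

lemma chain_mono {X : Type*} {p : ℕ → Set X} (h : ∀ n, p n ⊆ p (n + 1)) :
    ∀ {n m : ℕ}, n ≤ m → p n ⊆ p m := by
  intro n m hnm
  induction m with
  | zero => rw [Nat.le_zero.mp hnm]
  | succ m ih =>
    rcases Nat.lt_or_ge n (m + 1) with h' | h'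
    · exact (ih (Nat.lt_succ_iff.mp h')).trans (h m)
    · rw [le_antisymm hnm h']

variable (σ₁ σ₂ : List (Set (O κ)) → Set (O κ × O κ)) (xs : ℕ → Set (O κ))

/-- One composite round of the simulation used to compose EF strategies. -/
def step (s : List (Set (O κ)) × List (Set (O κ))) (a : Set (O κ)) :
    List (Set (O κ)) × List (Set (O κ)) :=
  (s.1 ++ [s.1.getLastD ∅ ∪ a ∪ drp (σ₂ (s.2 ++ [s.2.getLastD ∅ ∪ a]))],
   (s.2 ++ [s.2.getLastD ∅ ∪ a]) ++
     [(s.2.getLastD ∅ ∪ a) ∪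
       drp (σ₁ (s.1 ++ [s.1.getLastD ∅ ∪ a ∪ drp (σ₂ (s.2 ++ [s.2.getLastD ∅ ∪ a]))]))])

/-- The simulated pair of histories (for game 1 and game 2) determined by a history `l`
of moves of player I in the composed game. -/
def sim (l : List (Set (O κ))) : List (Set (O κ)) × List (Set (O κ)) :=
  l.foldl (step σ₁ σ₂) ([], [])

lemma sim_succ (n : ℕ) :
    sim σ₁ σ₂ ((List.range (n + 1)).map xs)
      = step σ₁ σ₂ (sim σ₁ σ₂ ((List.range n).map xs)) (xs n) := by
  unfold sim; rw [List.range_succ, List.map_append, List.foldl_append]; try rfl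

/-- The simulated moves of player I in game 1. -/
def useq (n : ℕ) : Set (O κ) :=
  (sim σ₁ σ₂ ((List.range (n + 1)).map xs)).1.getD n ∅

/-- The simulated moves of player I in game 2. -/
def vseq (m : ℕ) : Set (O κ) :=
  (sim σ₁ σ₂ ((List.range (m / 2 + 1)).map xs)).2.getD m ∅

lemma step_def (Lu Lv : List (Set (O κ))) (a : Set (O κ)) :
    step σ₁ σ₂ (Lu, Lv) a =
      (Lu ++ [Lu.getLastD ∅ ∪ a ∪ drp (σ₂ (Lv ++ [Lv.getLastD ∅ ∪ a]))],
       (Lv ++ [Lv.getLastD ∅ ∪ a]) ++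
         [(Lv.getLastD ∅ ∪ a) ∪
           drp (σ₁ (Lu ++ [Lu.getLastD ∅ ∪ a ∪ drp (σ₂ (Lv ++ [Lv.getLastD ∅ ∪ a]))]))]) := rfl

lemma step_fst_getD (Lu Lv : List (Set (O κ))) (a : Set (O κ)) {k : ℕ} (h : Lu.length = k) :
    (step σ₁ σ₂ (Lu, Lv) a).1.getD k ∅
      = Lu.getLastD ∅ ∪ a ∪ drp (σ₂ (Lv ++ [Lv.getLastD ∅ ∪ a])) := by
  rw [step_def]; exact getD_concat_len h _ _

lemma step_snd_getD₁ (Lu Lv : List (Set (O κ))) (a : Set (O κ)) {k : ℕ} (h : Lv.length = k) :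
    (step σ₁ σ₂ (Lu, Lv) a).2.getD k ∅ = Lv.getLastD ∅ ∪ a := by
  rw [step_def]
  subst h
  rw [getD_append_lt _ _ _ _ (by simp)]
  exact getD_concat_len rfl _ _

lemma step_snd_getD₂ (Lu Lv : List (Set (O κ))) (a : Set (O κ)) {k : ℕ} (h : Lv.length + 1 = k) :
    (step σ₁ σ₂ (Lu, Lv) a).2.getD k ∅
      = (Lv.getLastD ∅ ∪ a) ∪
          drp (σ₁ (Lu ++ [Lu.getLastD ∅ ∪ a ∪ drp (σ₂ (Lv ++ [Lv.getLastD ∅ ∪ a]))])) := by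
  rw [step_def]
  subst h
  exact getD_concat_len (by simp) _ _

lemma step_eq (Lu Lv : List (Set (O κ))) (a : Set (O κ)) :
    step σ₁ σ₂ (Lu, Lv) a =
      (Lu ++ [(step σ₁ σ₂ (Lu, Lv) a).1.getD Lu.length ∅],
       Lv ++ [(step σ₁ σ₂ (Lu, Lv) a).2.getD Lv.length ∅,
              (step σ₁ σ₂ (Lu, Lv) a).2.getD (Lv.length + 1) ∅]) := by
  rw [step_fst_getD σ₁ σ₂ Lu Lv a rfl, step_snd_getD₁ σ₁ σ₂ Lu Lv a rfl,
    step_snd_getD₂ σ₁ σ₂ Lu Lv a rfl]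
  rw [step_def]
  simp

lemma simSpec (n : ℕ) :
    sim σ₁ σ₂ ((List.range (n + 1)).map xs)
      = ((List.range (n + 1)).map (useq σ₁ σ₂ xs),
         (List.range (2 * n + 2)).map (vseq σ₁ σ₂ xs)) := by
  induction n with
  | zero =>
    have h0 : sim σ₁ σ₂ ((List.range 0).map xs) = ([], []) := rfl
    have h : sim σ₁ σ₂ ((List.range (0 + 1)).map xs) = step σ₁ σ₂ ([], []) (xs 0) := by
      rw [sim_succ, h0]
    rw [h]
    have e1 : (List.range (0 + 1)).map (useq σ₁ σ₂ xs) = [useq σ₁ σ₂ xs 0] := by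
      rw [map_range_succ]; simp
    have e2 : (List.range (2 * 0 + 2)).map (vseq σ₁ σ₂ xs)
        = [vseq σ₁ σ₂ xs 0, vseq σ₁ σ₂ xs 1] := by
      rw [map_range_split _ (show 2 * 0 + 2 = 1 + 1 by omega),
        map_range_split _ (show (1 : ℕ) = 0 + 1 by omega)]
      simp
    rw [e1, e2]
    have hu0 : useq σ₁ σ₂ xs 0 = (step σ₁ σ₂ ([], []) (xs 0)).1.getD 0 ∅ := by
      unfold useq; rw [h]; try rfl
    have hv0 : vseq σ₁ σ₂ xs 0 = (step σ₁ σ₂ ([], []) (xs 0)).2.getD 0 ∅ := by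
      unfold vseq; rw [show (0 : ℕ) / 2 + 1 = 0 + 1 by omega, h]; try rfl
    have hv1 : vseq σ₁ σ₂ xs 1 = (step σ₁ σ₂ ([], []) (xs 0)).2.getD (0 + 1) ∅ := by
      unfold vseq; rw [show (1 : ℕ) / 2 + 1 = 0 + 1 by omega, h]; try rfl
    rw [hu0, hv0, hv1]
    conv_lhs => rw [step_eq σ₁ σ₂ [] [] (xs 0)]
    simp
  | succ n ih =>
    rw [sim_succ, ih]
    have e1 : (List.range (n + 1 + 1)).map (useq σ₁ σ₂ xs)
        = (List.range (n + 1)).map (useq σ₁ σ₂ xs) ++ [useq σ₁ σ₂ xs (n + 1)] :=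
      map_range_succ _ _
    have e2 : (List.range (2 * (n + 1) + 2)).map (vseq σ₁ σ₂ xs)
        = (List.range (2 * n + 2)).map (vseq σ₁ σ₂ xs)
            ++ [vseq σ₁ σ₂ xs (2 * n + 2), vseq σ₁ σ₂ xs (2 * n + 3)] := by
      rw [map_range_split _ (show 2 * (n + 1) + 2 = (2 * n + 3) + 1 by omega),
        map_range_split _ (show 2 * n + 3 = (2 * n + 2) + 1 by omega)]
      simp
    rw [e1, e2]
    have hstep : sim σ₁ σ₂ ((List.range (n + 1 + 1)).map xs)
        = step σ₁ σ₂ ((List.range (n + 1)).map (useq σ₁ σ₂ xs),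
            (List.range (2 * n + 2)).map (vseq σ₁ σ₂ xs)) (xs (n + 1)) := by
      rw [sim_succ, ih]
    have hu1 : useq σ₁ σ₂ xs (n + 1)
        = (step σ₁ σ₂ ((List.range (n + 1)).map (useq σ₁ σ₂ xs),
            (List.range (2 * n + 2)).map (vseq σ₁ σ₂ xs)) (xs (n + 1))).1.getD (n + 1) ∅ := by
      unfold useq; rw [hstep]; try rfl
    have hv2 : vseq σ₁ σ₂ xs (2 * n + 2)
        = (step σ₁ σ₂ ((List.range (n + 1)).map (useq σ₁ σ₂ xs),
            (List.range (2 * n + 2)).map (vseq σ₁ σ₂ xs)) (xs (n + 1))).2.getD (2 * n + 2) ∅ := by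
      unfold vseq; rw [show (2 * n + 2) / 2 + 1 = n + 1 + 1 by omega, hstep]; try rfl
    have hv3 : vseq σ₁ σ₂ xs (2 * n + 3)
        = (step σ₁ σ₂ ((List.range (n + 1)).map (useq σ₁ σ₂ xs),
            (List.range (2 * n + 2)).map (vseq σ₁ σ₂ xs)) (xs (n + 1))).2.getD (2 * n + 2 + 1) ∅ := by
      unfold vseq; rw [show (2 * n + 3) / 2 + 1 = n + 1 + 1 by omega, hstep]; try rfl
    rw [hu1, hv2, hv3]
    conv_lhs => rw [step_eq]
    simp

lemma sim_step (n : ℕ) :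
    sim σ₁ σ₂ ((List.range (n + 1 + 1)).map xs)
      = step σ₁ σ₂ ((List.range (n + 1)).map (useq σ₁ σ₂ xs),
          (List.range (2 * n + 2)).map (vseq σ₁ σ₂ xs)) (xs (n + 1)) := by
  rw [sim_succ, simSpec]

lemma sim_base :
    sim σ₁ σ₂ ((List.range (0 + 1)).map xs) = step σ₁ σ₂ ([], []) (xs 0) := by
  rw [sim_succ]; try rfl

lemma vseq_zero : vseq σ₁ σ₂ xs 0 = ∅ ∪ xs 0 := by
  have h : vseq σ₁ σ₂ xs 0 = (step σ₁ σ₂ ([], []) (xs 0)).2.getD 0 ∅ := by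
    unfold vseq; rw [show (0 : ℕ) / 2 + 1 = 0 + 1 by omega, sim_base]; try rfl
  rw [h, step_snd_getD₁ σ₁ σ₂ [] [] (xs 0) (show ([] : List (Set (O κ))).length = 0 from rfl)]; try rfl

lemma useq_zero :
    useq σ₁ σ₂ xs 0 = ∅ ∪ xs 0 ∪ drp (σ₂ ((List.range (0 + 1)).map (vseq σ₁ σ₂ xs))) := by
  have h : useq σ₁ σ₂ xs 0 = (step σ₁ σ₂ ([], []) (xs 0)).1.getD 0 ∅ := by
    unfold useq; rw [sim_base]; try rfl
  rw [h, step_fst_getD σ₁ σ₂ [] [] (xs 0) (show ([] : List (Set (O κ))).length = 0 from rfl)]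
  have e : (List.range (0 + 1)).map (vseq σ₁ σ₂ xs) = [vseq σ₁ σ₂ xs 0] := by
    rw [map_range_succ]; simp
  rw [e, vseq_zero]
  rfl

lemma vseq_one :
    vseq σ₁ σ₂ xs 1 = vseq σ₁ σ₂ xs 0 ∪ drp (σ₁ ((List.range (0 + 1)).map (useq σ₁ σ₂ xs))) := by
  have h : vseq σ₁ σ₂ xs 1 = (step σ₁ σ₂ ([], []) (xs 0)).2.getD 1 ∅ := by
    unfold vseq; rw [show (1 : ℕ) / 2 + 1 = 0 + 1 by omega, sim_base]; try rfl
  rw [h, step_snd_getD₂ σ₁ σ₂ [] [] (xs 0) (show ([] : List (Set (O κ))).length + 1 = 1 from rfl)]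
  have e : (List.range (0 + 1)).map (useq σ₁ σ₂ xs) = [useq σ₁ σ₂ xs 0] := by
    rw [map_range_succ]; simp
  rw [e, useq_zero, vseq_zero]
  have e2 : (List.range (0 + 1)).map (vseq σ₁ σ₂ xs) = [vseq σ₁ σ₂ xs 0] := by
    rw [map_range_succ]; simp
  rw [e2, vseq_zero]
  rfl

lemma vseq_even (n : ℕ) :
    vseq σ₁ σ₂ xs (2 * n + 2) = vseq σ₁ σ₂ xs (2 * n + 1) ∪ xs (n + 1) := by
  have h : vseq σ₁ σ₂ xs (2 * n + 2)
      = (step σ₁ σ₂ ((List.range (n + 1)).map (useq σ₁ σ₂ xs),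
          (List.range (2 * n + 2)).map (vseq σ₁ σ₂ xs)) (xs (n + 1))).2.getD (2 * n + 2) ∅ := by
    unfold vseq; rw [show (2 * n + 2) / 2 + 1 = n + 1 + 1 by omega, sim_step]; try rfl
  rw [h, step_snd_getD₁ σ₁ σ₂ _ _ _ (by simp)]
  rw [getLastD_map_range (vseq σ₁ σ₂ xs) (show (2 * n + 1) + 1 = 2 * n + 2 by omega)]

lemma useq_succ (n : ℕ) :
    useq σ₁ σ₂ xs (n + 1)
      = useq σ₁ σ₂ xs n ∪ xs (n + 1)
          ∪ drp (σ₂ ((List.range (2 * n + 3)).map (vseq σ₁ σ₂ xs))) := by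
  have h : useq σ₁ σ₂ xs (n + 1)
      = (step σ₁ σ₂ ((List.range (n + 1)).map (useq σ₁ σ₂ xs),
          (List.range (2 * n + 2)).map (vseq σ₁ σ₂ xs)) (xs (n + 1))).1.getD (n + 1) ∅ := by
    unfold useq; rw [sim_step]; try rfl
  rw [h, step_fst_getD σ₁ σ₂ _ _ _ (by simp)]
  rw [getLastD_map_range (useq σ₁ σ₂ xs) (show n + 1 = n + 1 from rfl)]
  rw [getLastD_map_range (vseq σ₁ σ₂ xs) (show (2 * n + 1) + 1 = 2 * n + 2 by omega)]
  rw [← vseq_even σ₁ σ₂ xs n]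
  rw [← map_range_split (vseq σ₁ σ₂ xs) (show 2 * n + 3 = (2 * n + 2) + 1 by omega)]

lemma vseq_odd (n : ℕ) :
    vseq σ₁ σ₂ xs (2 * n + 3)
      = vseq σ₁ σ₂ xs (2 * n + 2)
          ∪ drp (σ₁ ((List.range (n + 1 + 1)).map (useq σ₁ σ₂ xs))) := by
  have h : vseq σ₁ σ₂ xs (2 * n + 3)
      = (step σ₁ σ₂ ((List.range (n + 1)).map (useq σ₁ σ₂ xs),
          (List.range (2 * n + 2)).map (vseq σ₁ σ₂ xs)) (xs (n + 1))).2.getD (2 * n + 3) ∅ := by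
    unfold vseq; rw [show (2 * n + 3) / 2 + 1 = n + 1 + 1 by omega, sim_step]; try rfl
  rw [h, step_snd_getD₂ σ₁ σ₂ _ _ _ (by simp)]
  rw [getLastD_map_range (useq σ₁ σ₂ xs) (show n + 1 = n + 1 from rfl)]
  rw [getLastD_map_range (vseq σ₁ σ₂ xs) (show (2 * n + 1) + 1 = 2 * n + 2 by omega)]
  rw [← vseq_even σ₁ σ₂ xs n]
  rw [← map_range_split (vseq σ₁ σ₂ xs) (show 2 * n + 3 = (2 * n + 2) + 1 by omega)]
  rw [← useq_succ σ₁ σ₂ xs n]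
  rw [← map_range_succ (useq σ₁ σ₂ xs) (n + 1)]

end TransAux
section TransMain

variable {κ : Cardinal.{0}} {L : FirstOrder.Language} {α : Ordinal}

lemma drp_bound {α : Ordinal} {p : Set (O κ × O κ)}
    (h : ∀ q ∈ p, ((q.1 : O κ) : Ordinal) < α ∧ ((q.2 : O κ) : Ordinal) < α) :
    ∀ z ∈ drp p, ((z : O κ) : Ordinal) < α := by
  rintro z (⟨q, hq, rfl⟩ | ⟨q, hq, rfl⟩)
  · exact (h q hq).1
  · exact (h q hq).2

lemma map_trunc {w : ℕ → Set (O κ)} {N k : ℕ} (h : k ≤ N + 1) :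
    (List.range k).map (fun j => w (min j N)) = (List.range k).map w := by
  apply List.map_congr_left
  intro j hj
  have hj' : j < k := List.mem_range.mp hj
  show w (min j N) = w j
  rw [min_eq_left (by omega)]

lemma trunc_legal {w : ℕ → Set (O κ)} {N : ℕ}
    (h : ∀ n, n ≤ N → LegalI κ α (if n = 0 then ∅ else w (n - 1)) (w n)) :
    ∀ m, LegalI κ α (if m = 0 then ∅ else w (min (m - 1) N)) (w (min m N)) := by
  intro m
  cases m with
  | zero =>
    have h0 := h 0 (Nat.zero_le N)
    simpa [Nat.zero_min] using h0
  | succ m =>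
    rw [if_neg (Nat.succ_ne_zero m)]
    simp only [Nat.add_sub_cancel]
    rcases le_or_gt (m + 1) N with hle | hlt
    · rw [min_eq_left hle, min_eq_left (by omega : m ≤ N)]
      have h1 := h (m + 1) hle
      rwa [if_neg (Nat.succ_ne_zero m), Nat.add_sub_cancel] at h1
    · rw [min_eq_right (by omega : N ≤ m + 1), min_eq_right (by omega : N ≤ m)]
      have hNN := h N le_rfl
      exact ⟨hNN.1, hNN.2.1, subset_rfl⟩

lemma IIWinsEF_trans (hκ₁ : ℵ₀ < κ) {A B C : L.Structure (O κ)}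
    (h₁ : IIWinsEF κ α A B) (h₂ : IIWinsEF κ α B C) : IIWinsEF κ α A C := by
  obtain ⟨σ₁, hσ₁⟩ := h₁
  obtain ⟨σ₂, hσ₂⟩ := h₂
  refine ⟨fun l => pcomp (σ₂ (sim σ₁ σ₂ l).2) (σ₁ (sim σ₁ σ₂ l).1), fun xs hxs => ?_⟩
  have legal : ∀ N : ℕ,
      (∀ n, n ≤ N →
        LegalI κ α (if n = 0 then ∅ else useq σ₁ σ₂ xs (n - 1)) (useq σ₁ σ₂ xs n)) ∧
      (∀ m, m ≤ 2 * N + 1 →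
        LegalI κ α (if m = 0 then ∅ else vseq σ₁ σ₂ xs (m - 1)) (vseq σ₁ σ₂ xs m)) := by
    intro N
    induction N with
    | zero =>
      have LV0 : LegalI κ α ∅ (vseq σ₁ σ₂ xs 0) := by
        rw [vseq_zero]
        refine ⟨?_, mk_union_lt hκ₁ (mk_empty_lt hκ₁) (hxs 0).2.1, Set.empty_subset _⟩
        rintro x (h | h)
        · exact absurd h (Set.notMem_empty x)
        · exact (hxs 0).1 x h
      have hvt := trunc_legal (w := vseq σ₁ σ₂ xs) (N := 0) (fun n hn => by
        have hn0 : n = 0 := Nat.le_zero.mp hn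
        subst hn0
        simpa using LV0)
      obtain ⟨hgt, -⟩ := hσ₂ (fun m => vseq σ₁ σ₂ xs (min m 0)) hvt
      have hg0 := hgt 0
      rw [map_trunc (by omega), map_trunc (by omega)] at hg0
      have LU0 : LegalI κ α ∅ (useq σ₁ σ₂ xs 0) := by
        rw [useq_zero]
        refine ⟨?_, mk_union_lt hκ₁ (mk_union_lt hκ₁ (mk_empty_lt hκ₁) (hxs 0).2.1)
          (mk_drp_lt hκ₁ hg0.2.1), Set.empty_subset _⟩
        rintro x ((h | h) | h)
        · exact absurd h (Set.notMem_empty x)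
        · exact (hxs 0).1 x h
        · exact drp_bound hg0.1 x h
      have hut := trunc_legal (w := useq σ₁ σ₂ xs) (N := 0) (fun n hn => by
        have hn0 : n = 0 := Nat.le_zero.mp hn
        subst hn0
        simpa using LU0)
      obtain ⟨hft, -⟩ := hσ₁ (fun n => useq σ₁ σ₂ xs (min n 0)) hut
      have hf0 := hft 0
      rw [map_trunc (by omega), map_trunc (by omega)] at hf0
      have LV1 : LegalI κ α (vseq σ₁ σ₂ xs 0) (vseq σ₁ σ₂ xs 1) := by
        rw [vseq_one]
        refine ⟨?_, mk_union_lt hκ₁ LV0.2.1 (mk_drp_lt hκ₁ hf0.2.1), Set.subset_union_left⟩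
        rintro x (h | h)
        · exact LV0.1 x h
        · exact drp_bound hf0.1 x h
      constructor
      · intro n hn
        have hn0 : n = 0 := Nat.le_zero.mp hn
        subst hn0
        simpa using LU0
      · intro m hm
        rcases (by omega : m = 0 ∨ m = 1) with h | h
        · subst h; simpa using LV0
        · subst h; simpa using LV1
    | succ N ih =>
      obtain ⟨ihU, ihV⟩ := ih
      have LV2 : LegalI κ α (vseq σ₁ σ₂ xs (2 * N + 1)) (vseq σ₁ σ₂ xs (2 * N + 2)) := by
        rw [vseq_even]
        refine ⟨?_, mk_union_lt hκ₁ (ihV (2 * N + 1) le_rfl).2.1 (hxs (N + 1)).2.1,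
          Set.subset_union_left⟩
        rintro x (h | h)
        · exact (ihV (2 * N + 1) le_rfl).1 x h
        · exact (hxs (N + 1)).1 x h
      have hV' : ∀ m, m ≤ 2 * N + 2 →
          LegalI κ α (if m = 0 then ∅ else vseq σ₁ σ₂ xs (m - 1)) (vseq σ₁ σ₂ xs m) := by
        intro m hm
        rcases Nat.lt_or_ge m (2 * N + 2) with h | h
        · exact ihV m (by omega)
        · have hm2 : m = 2 * N + 2 := by omega
          subst hm2
          rw [if_neg (by omega)]
          exact LV2
      have hvt := trunc_legal (w := vseq σ₁ σ₂ xs) (N := 2 * N + 2) hV'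
      obtain ⟨hgt, -⟩ := hσ₂ (fun m => vseq σ₁ σ₂ xs (min m (2 * N + 2))) hvt
      have hgbig := hgt (2 * N + 2)
      rw [map_trunc (by omega), map_trunc (by omega)] at hgbig
      have LU1 : LegalI κ α (useq σ₁ σ₂ xs N) (useq σ₁ σ₂ xs (N + 1)) := by
        rw [useq_succ]
        refine ⟨?_, mk_union_lt hκ₁ (mk_union_lt hκ₁ (ihU N le_rfl).2.1 (hxs (N + 1)).2.1)
          (mk_drp_lt hκ₁ hgbig.2.1), fun x hx => Or.inl (Or.inl hx)⟩
        rintro x ((h | h) | h)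
        · exact (ihU N le_rfl).1 x h
        · exact (hxs (N + 1)).1 x h
        · exact drp_bound hgbig.1 x h
      have hU' : ∀ n, n ≤ N + 1 →
          LegalI κ α (if n = 0 then ∅ else useq σ₁ σ₂ xs (n - 1)) (useq σ₁ σ₂ xs n) := by
        intro n hn
        rcases Nat.lt_or_ge n (N + 1) with h | h
        · exact ihU n (by omega)
        · have hn2 : n = N + 1 := by omega
          subst hn2
          rw [if_neg (by omega)]
          exact LU1
      have hut := trunc_legal (w := useq σ₁ σ₂ xs) (N := N + 1) hU'
      obtain ⟨hft, -⟩ := hσ₁ (fun n => useq σ₁ σ₂ xs (min n (N + 1))) hut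
      have hfbig := hft (N + 1)
      rw [map_trunc (by omega), map_trunc (by omega)] at hfbig
      have LV3 : LegalI κ α (vseq σ₁ σ₂ xs (2 * N + 2)) (vseq σ₁ σ₂ xs (2 * N + 3)) := by
        rw [vseq_odd]
        refine ⟨?_, mk_union_lt hκ₁ LV2.2.1 (mk_drp_lt hκ₁ hfbig.2.1), Set.subset_union_left⟩
        rintro x (h | h)
        · exact LV2.1 x h
        · exact drp_bound hfbig.1 x h
      refine ⟨hU', ?_⟩
      intro m hm
      rcases Nat.lt_or_ge m (2 * N + 3) with h | h
      · exact hV' m (by omega)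
      · have hm2 : m = 2 * N + 3 := by omega
        subst hm2
        rw [if_neg (by omega)]
        exact LV3
  have hUlegal : ∀ n, LegalI κ α (if n = 0 then ∅ else useq σ₁ σ₂ xs (n - 1))
      (useq σ₁ σ₂ xs n) := fun n => (legal n).1 n le_rfl
  have hVlegal : ∀ m, LegalI κ α (if m = 0 then ∅ else vseq σ₁ σ₂ xs (m - 1))
      (vseq σ₁ σ₂ xs m) := fun m => (legal m).2 m (by omega)
  obtain ⟨hf, hFiso⟩ := hσ₁ (useq σ₁ σ₂ xs) hUlegal
  obtain ⟨hg, hGiso⟩ := hσ₂ (vseq σ₁ σ₂ xs) hVlegal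
  have fstep : ∀ n, σ₁ ((List.range (n + 1)).map (useq σ₁ σ₂ xs))
      ⊆ σ₁ ((List.range (n + 1 + 1)).map (useq σ₁ σ₂ xs)) := by
    intro n
    have h := (hf (n + 1)).2.2.1
    rwa [if_neg (Nat.succ_ne_zero n)] at h
  have gstep : ∀ n, σ₂ ((List.range (n + 1)).map (vseq σ₁ σ₂ xs))
      ⊆ σ₂ ((List.range (n + 1 + 1)).map (vseq σ₁ σ₂ xs)) := by
    intro n
    have h := (hg (n + 1)).2.2.1
    rwa [if_neg (Nat.succ_ne_zero n)] at h
  have fmono : ∀ {k k' : ℕ}, k ≤ k' → σ₁ ((List.range (k + 1)).map (useq σ₁ σ₂ xs))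
      ⊆ σ₁ ((List.range (k' + 1)).map (useq σ₁ σ₂ xs)) := by
    intro k k' hk
    exact chain_mono (p := fun j => σ₁ ((List.range (j + 1)).map (useq σ₁ σ₂ xs))) fstep hk
  have gmono : ∀ {k k' : ℕ}, k ≤ k' → σ₂ ((List.range (k + 1)).map (vseq σ₁ σ₂ xs))
      ⊆ σ₂ ((List.range (k' + 1)).map (vseq σ₁ σ₂ xs)) := by
    intro k k' hk
    exact chain_mono (p := fun j => σ₂ ((List.range (j + 1)).map (vseq σ₁ σ₂ xs))) gstep hk
  have hxu : ∀ n, xs n ⊆ useq σ₁ σ₂ xs n := by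
    intro n
    cases n with
    | zero => rw [useq_zero]; exact fun a ha => Or.inl (Or.inr ha)
    | succ m => rw [useq_succ]; exact fun a ha => Or.inl (Or.inr ha)
  have hxv : ∀ n, xs n ⊆ vseq σ₁ σ₂ xs (2 * n) := by
    intro n
    cases n with
    | zero =>
      show xs 0 ⊆ vseq σ₁ σ₂ xs 0
      rw [vseq_zero]; exact Set.subset_union_right
    | succ m =>
      show xs (m + 1) ⊆ vseq σ₁ σ₂ xs (2 * m + 2)
      rw [vseq_even]; exact Set.subset_union_right
  have hfv : ∀ n, drp (σ₁ ((List.range (n + 1)).map (useq σ₁ σ₂ xs)))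
      ⊆ vseq σ₁ σ₂ xs (2 * n + 1) := by
    intro n
    cases n with
    | zero =>
      show drp (σ₁ ((List.range (0 + 1)).map (useq σ₁ σ₂ xs))) ⊆ vseq σ₁ σ₂ xs 1
      rw [vseq_one]; exact Set.subset_union_right
    | succ m =>
      show drp (σ₁ ((List.range (m + 1 + 1)).map (useq σ₁ σ₂ xs))) ⊆ vseq σ₁ σ₂ xs (2 * m + 3)
      rw [vseq_odd]; exact Set.subset_union_right
  have hgu : ∀ n, drp (σ₂ ((List.range (2 * n + 1)).map (vseq σ₁ σ₂ xs)))
      ⊆ useq σ₁ σ₂ xs n := by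
    intro n
    cases n with
    | zero =>
      show drp (σ₂ ((List.range (0 + 1)).map (vseq σ₁ σ₂ xs))) ⊆ useq σ₁ σ₂ xs 0
      rw [useq_zero]; exact Set.subset_union_right
    | succ m =>
      show drp (σ₂ ((List.range (2 * m + 3)).map (vseq σ₁ σ₂ xs))) ⊆ useq σ₁ σ₂ xs (m + 1)
      rw [useq_succ]; exact Set.subset_union_right
  have hval : ∀ n, (fun l => pcomp (σ₂ (sim σ₁ σ₂ l).2) (σ₁ (sim σ₁ σ₂ l).1))
        ((List.range (n + 1)).map xs)
      = pcomp (σ₂ ((List.range (2 * n + 2)).map (vseq σ₁ σ₂ xs)))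
          (σ₁ ((List.range (n + 1)).map (useq σ₁ σ₂ xs))) := by
    intro n
    show pcomp (σ₂ (sim σ₁ σ₂ ((List.range (n + 1)).map xs)).2)
      (σ₁ (sim σ₁ σ₂ ((List.range (n + 1)).map xs)).1) = _
    rw [simSpec]
  have main : ∀ n, LegalII κ α (xs n)
      (if n = 0 then ∅ else
        pcomp (σ₂ ((List.range (2 * (n - 1) + 2)).map (vseq σ₁ σ₂ xs)))
          (σ₁ ((List.range ((n - 1) + 1)).map (useq σ₁ σ₂ xs))))
      (pcomp (σ₂ ((List.range (2 * n + 2)).map (vseq σ₁ σ₂ xs)))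
        (σ₁ ((List.range (n + 1)).map (useq σ₁ σ₂ xs)))) := by
    intro n
    refine ⟨?_, ?_, ?_, ?_, ?_⟩
    · rintro q ⟨b, hb1, hb2⟩
      exact ⟨((hf n).1 (q.1, b) hb1).1, ((hg (2 * n + 1)).1 (b, q.2) hb2).2⟩
    · exact mk_pcomp_lt hκ₁ (hf n).2.1 (hg (2 * n + 1)).2.2.2.1
    · cases n with
      | zero => simp
      | succ m =>
        rw [if_neg (Nat.succ_ne_zero m)]
        exact pcomp_mono (gmono (by omega)) (fmono (by omega))
    · rintro x y y' ⟨b, hb1, hb2⟩ ⟨b', hb1', hb2'⟩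
      have hbb : b = b' := (hf n).2.2.2.1 x b b' hb1 hb1'
      refine (hg (2 * n + 1)).2.2.2.1 b y y' hb2 ?_
      rw [hbb]; exact hb2'
    · intro a ha
      constructor
      · obtain ⟨b, hb⟩ := ((hf n).2.2.2.2 a (hxu n ha)).1
        obtain ⟨c, hc⟩ := ((hg (2 * n + 1)).2.2.2.2 b (hfv n (mem_drp_right hb))).1
        exact ⟨c, b, hb, hc⟩
      · obtain ⟨z, hz⟩ := ((hg (2 * n)).2.2.2.2 a (hxv n ha)).2
        obtain ⟨y, hy⟩ := ((hf n).2.2.2.2 z (hgu n (mem_drp_left hz))).2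
        exact ⟨y, z, hy, gmono (by omega : 2 * n ≤ 2 * n + 1) hz⟩
  constructor
  · intro n
    cases n with
    | zero =>
      rw [if_pos rfl, hval 0]
      have h0 := main 0
      rwa [if_pos rfl] at h0
    | succ m =>
      rw [if_neg (Nat.succ_ne_zero m), hval (m + 1), hval m]
      have h1 := main (m + 1)
      rwa [if_neg (Nat.succ_ne_zero m)] at h1
  · have hiso_mem : ∀ q : O κ × O κ,
        q ∈ (⋃ n, (fun l => pcomp (σ₂ (sim σ₁ σ₂ l).2) (σ₁ (sim σ₁ σ₂ l).1))
          ((List.range (n + 1)).map xs)) →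
        ∃ b, (q.1, b) ∈ (⋃ n, σ₁ ((List.range (n + 1)).map (useq σ₁ σ₂ xs))) ∧
             (b, q.2) ∈ (⋃ n, σ₂ ((List.range (n + 1)).map (vseq σ₁ σ₂ xs))) := by
      intro q hq
      obtain ⟨n, hn⟩ := Set.mem_iUnion.mp hq
      rw [hval n] at hn
      obtain ⟨b, hb1, hb2⟩ := hn
      exact ⟨b, Set.mem_iUnion.mpr ⟨n, hb1⟩, Set.mem_iUnion.mpr ⟨2 * n + 1, hb2⟩⟩
    refine ⟨?_, ?_, ?_⟩
    · intro x y y' hy hy'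
      obtain ⟨b, hb1, hb2⟩ := hiso_mem _ hy
      obtain ⟨b', hb1', hb2'⟩ := hiso_mem _ hy'
      have hbb : b = b' := hFiso.1 x b b' hb1 hb1'
      refine hGiso.1 b y y' hb2 ?_
      rw [hbb]; exact hb2'
    · intro x x' y hx hx'
      obtain ⟨b, hb1, hb2⟩ := hiso_mem _ hx
      obtain ⟨b', hb1', hb2'⟩ := hiso_mem _ hx'
      have hbb : b = b' := hGiso.2.1 b b' y hb2 hb2'
      refine hFiso.2.1 x x' b hb1 ?_
      rw [hbb]; exact hb1'
    · intro k R a c hac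
      choose b hb1 hb2 using fun i => hiso_mem _ (hac i)
      exact (hFiso.2.2 k R a b hb1).trans (hGiso.2.2 k R b c hb2)

end TransMain
end EFEquiv

/-- Lemma 2.7 of [HM15]. There is a club `C_EF ⊆ κ` such that for every
`α ∈ C_EF` the relation "player II has a winning strategy in `EF^α_ω (A↾α, B↾α)`" is an
equivalence relation on structures with domain `κ` in a countable relational vocabulary. -/
theorem EF_equivalence_club (κ : Cardinal.{0}) (hκ₁ : ℵ₀ < κ) (hκ₂ : κ ^< κ = κ)
    (L : FirstOrder.Language) [L.IsRelational] [Countable (Σ n, L.Relations n)] :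
    ∃ C, IsClub κ C ∧ ∀ α ∈ C,
      Equivalence (fun A B : L.Structure (O κ) => IIWinsEF κ α A B) := by
  refine ⟨Set.Iio κ.ord,
    ⟨subset_rfl, fun α hα => ⟨α, hα, le_rfl⟩, fun α _ hα _ => hα⟩, ?_⟩
  intro α _
  exact ⟨fun A => IIWinsEF_refl hκ₁ α A, fun h => IIWinsEF_symm h,
    fun h h' => IIWinsEF_trans hκ₁ h h'⟩

end GenCantor
end
end

section
/- Let κ be an uncountable cardinal with κ^{<κ} = κ. If f : 2^κ → 2^κ is a Borel function and B ⊆ 2^κ is a Borel* set, then f⁻¹[B] is a Borel* set. -/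
noncomputable section

open Cardinal Set

namespace GenCantor

/-- The basic open set `[ζ]` determined by the restriction of `ζ` to the ordinals below `β`. -/
def basicOpen (κ : Cardinal.{0}) (β : Ordinal) (ζ : O κ → Bool) : Set (Point κ) :=
  {η | ∀ γ : O κ, (γ : Ordinal) < β → η γ = ζ γ}

/-- The collection of basic open subsets of `2^κ`. -/
def basicOpens (κ : Cardinal.{0}) : Set (Set (Point κ)) :=
  {s | ∃ β < κ.ord, ∃ ζ, s = basicOpen κ β ζ}

/-- The bounded topology on `2^κ`, generated by the basic open sets. -/
def boundedTopology (κ : Cardinal.{0}) : TopologicalSpace (Point κ) :=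
  TopologicalSpace.generateFrom (basicOpens κ)

/-- Partial sequences of elements of `κ`: a node of the tree `κ^{<κ}` is represented by a
function `Ordinal → Option (O κ)` whose support is an initial segment `Iio β`, `β < κ`. -/
abbrev PreSeq (κ : Cardinal.{0}) : Type 1 := Ordinal → Option (O κ)

/-- `f` represents a sequence of ordinals `< κ` of length `< κ`. -/
def IsSeq (κ : Cardinal.{0}) (f : PreSeq κ) : Prop :=
  ∃ β < κ.ord, ∀ γ, (f γ).isSome ↔ γ < β

/-- The (initial segment) tree order on sequences. -/
def seqLE {κ : Cardinal.{0}} (f g : PreSeq κ) : Prop :=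
  ∀ γ x, f γ = some x → g γ = some x

/-- The empty sequence, the root of a tree of sequences. -/
def seqRoot (κ : Cardinal.{0}) : PreSeq κ := fun _ => none

/-- The supremum (union) of a chain of sequences. -/
def seqSup {κ : Cardinal.{0}} (c : Set (PreSeq κ)) : PreSeq κ :=
  fun γ => open scoped Classical in
    if h : ∃ x, ∃ f ∈ c, f γ = some x then some h.choose else none


/-- `g` is an immediate successor of `f` in the tree `T`. -/
def ImmSucc {κ : Cardinal.{0}} (T : Set (PreSeq κ)) (f g : PreSeq κ) : Prop :=
  g ∈ T ∧ seqLE f g ∧ f ≠ g ∧ ∀ h ∈ T, seqLE f h → seqLE h g → h = f ∨ h = g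

/-- `f` is a leaf of the tree `T`. -/
def IsLeaf {κ : Cardinal.{0}} (T : Set (PreSeq κ)) (f : PreSeq κ) : Prop :=
  f ∈ T ∧ ∀ g ∈ T, seqLE f g → g = f

/-- Labels for the nodes of a `Borel*`-code over the space `Z`: every non-leaf node is
labelled `∩` or `∪`, and every leaf is labelled by a subset of `Z`. -/
inductive BLabel (Z : Type*) : Type _ where
  | inter : BLabel Z
  | union : BLabel Z
  | leaf : Set Z → BLabel Z

/-- A `Borel*`-code over the space `Z` whose leaf labels are members of the family
`Basic` of subsets of `Z` (for genuine `Borel*`-codes, `Basic` is the family of basic open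
sets): a closed `κ⁺,κ`-tree, presented as a downward closed subtree of `κ^{<κ}` of
cardinality `≤ κ` with no chains of length `κ` in which every chain has a (unique)
supremum, together with a labelling `h` of its nodes. -/
structure BorelStarCode (κ : Cardinal.{0}) (Z : Type*) (Basic : Set (Set Z)) where
  T : Set (PreSeq κ)
  h : PreSeq κ → BLabel Z
  mem_isSeq : ∀ f ∈ T, IsSeq κ f
  root_mem : seqRoot κ ∈ T
  downward : ∀ f ∈ T, ∀ g, IsSeq κ g → seqLE g f → g ∈ T
  card_le : Cardinal.mk ↥T ≤ Cardinal.lift.{1} κ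
  no_long_chain : ∀ c ⊆ T, IsChain seqLE c → Cardinal.mk ↥c < Cardinal.lift.{1} κ
  chain_sup : ∀ c ⊆ T, c.Nonempty → IsChain seqLE c → seqSup c ∈ T
  label_leaf : ∀ f ∈ T, IsLeaf T f → ∃ s ∈ Basic, h f = BLabel.leaf s
  label_node : ∀ f ∈ T, ¬ IsLeaf T f → h f = BLabel.inter ∨ h f = BLabel.union

/-- The positions of the game `B*(T, h, x)` that can be reached when player II plays
according to the strategy `σ`: the game starts at the root; at a node labelled `∩`
player I chooses an immediate successor, at a node labelled `∪` player II moves according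
to `σ`, and at a limit the game continues from the supremum of the previous moves. -/
inductive Reach {κ : Cardinal.{0}} {Z : Type*} {Basic : Set (Set Z)}
    (code : BorelStarCode κ Z Basic) (σ : PreSeq κ → PreSeq κ) : PreSeq κ → Prop where
  | root : Reach code σ (seqRoot κ)
  | inter (f g : PreSeq κ) : Reach code σ f → code.h f = BLabel.inter →
      ImmSucc code.T f g → Reach code σ g
  | union (f : PreSeq κ) : Reach code σ f → code.h f = BLabel.union →
      Reach code σ (σ f)
  | lim (c : Set (PreSeq κ)) : c.Nonempty → IsChain seqLE c →
      (∀ f ∈ c, Reach code σ f) → Reach code σ (seqSup c)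

/-- Player II has a winning strategy in the game `B*(T, h, x)`: a strategy `σ` which
always chooses an immediate successor at reachable `∪`-nodes, and such that `x` belongs to
the label of every reachable leaf. -/
def IIWinsBStar {κ : Cardinal.{0}} {Z : Type*} {Basic : Set (Set Z)}
    (code : BorelStarCode κ Z Basic) (x : Z) : Prop :=
  ∃ σ : PreSeq κ → PreSeq κ,
    (∀ f, Reach code σ f → code.h f = BLabel.union → ImmSucc code.T f (σ f)) ∧
    (∀ f s, Reach code σ f → code.h f = BLabel.leaf s → x ∈ s)

/-- `B` is a `Borel*` subset of `Z` (with respect to the family `Basic` of basic open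
subsets of `Z`): there is a `Borel*`-code such that `B` is the set of points for which
player II has a winning strategy in the associated game. -/
def IsBorelStar (κ : Cardinal.{0}) {Z : Type*} (Basic : Set (Set Z)) (B : Set Z) : Prop :=
  ∃ code : BorelStarCode κ Z Basic, B = {x | IIWinsBStar code x}


/-- The `κ`-Borel subsets of `2^κ`: the smallest collection of sets containing the basic
open sets and closed under unions and intersections of length (at most) `κ`. -/
inductive IsKBorel (κ : Cardinal.{0}) : Set (Point κ) → Prop where
  | basic : ∀ s ∈ basicOpens κ, IsKBorel κ s
  | iUnion (ι : Type) (hι : Cardinal.mk ι ≤ κ) (f : ι → Set (Point κ)) :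
      (∀ i, IsKBorel κ (f i)) → IsKBorel κ (⋃ i, f i)
  | iInter (ι : Type) (hι : Cardinal.mk ι ≤ κ) (f : ι → Set (Point κ)) :
      (∀ i, IsKBorel κ (f i)) → IsKBorel κ (⋂ i, f i)

/-- `f : 2^κ → 2^κ` is a Borel function: the preimage of every open set (in the bounded
topology) is `κ`-Borel. -/
def IsBorelFun (κ : Cardinal.{0}) (f : Point κ → Point κ) : Prop :=
  ∀ A : Set (Point κ), (boundedTopology κ).IsOpen A → IsKBorel κ (f ⁻¹' A)


variable {κ : Cardinal.{0}}

/-- support of `f` is exactly `Iio β`. -/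
def SeqLen (f : PreSeq κ) (β : Ordinal) : Prop := ∀ γ, (f γ).isSome ↔ γ < β

lemma seqLE_refl (f : PreSeq κ) : seqLE f f := fun _ _ h => h

instance : IsRefl (PreSeq κ) seqLE := ⟨seqLE_refl⟩

lemma seqLE_trans {f g h : PreSeq κ} (h1 : seqLE f g) (h2 : seqLE g h) : seqLE f h :=
  fun γ x hx => h2 γ x (h1 γ x hx)

lemma seqLE_antisymm {f g : PreSeq κ} (h1 : seqLE f g) (h2 : seqLE g f) : f = g := by
  funext γ
  cases hf : f γ with
  | some x => exact (h1 γ x hf).symm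
  | none =>
    cases hg : g γ with
    | some y => exact hf.symm.trans (h2 γ y hg)
    | none => rfl

lemma seqRoot_le (f : PreSeq κ) : seqLE (seqRoot κ) f := by
  intro γ x h; simp [seqRoot] at h

lemma seqLen_root : SeqLen (seqRoot κ) (0 : Ordinal) := by
  intro γ; simp [seqRoot, not_lt_zero]

lemma isSeq_root (hκ : (0:Cardinal) < κ) : IsSeq κ (seqRoot κ) :=
  ⟨0, by rwa [Cardinal.lt_ord, Ordinal.card_zero], seqLen_root⟩

lemma le_root_eq {f : PreSeq κ} (h : seqLE f (seqRoot κ)) : f = seqRoot κ := by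
  funext γ
  cases hf : f γ with
  | some x => have := h γ x hf; simp [seqRoot] at this
  | none => rfl

/-- two initial segments of the same sequence are comparable -/
lemma seq_comparable {f g h : PreSeq κ} (hf : IsSeq κ f) (hg : IsSeq κ g)
    (h1 : seqLE f h) (h2 : seqLE g h) : seqLE f g ∨ seqLE g f := by
  obtain ⟨β1, -, hl1⟩ := hf
  obtain ⟨β2, -, hl2⟩ := hg
  rcases le_total β1 β2 with hb | hb
  · left; intro γ x hx
    have hγ : γ < β1 := (hl1 γ).1 (by simp [hx])
    have : (g γ).isSome := (hl2 γ).2 (lt_of_lt_of_le hγ hb)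
    obtain ⟨y, hy⟩ := Option.isSome_iff_exists.1 this
    have heq : x = y := Option.some_inj.1 ((h1 γ x hx).symm.trans (h2 γ y hy))
    rw [hy, heq]
  · right; intro γ x hx
    have hγ : γ < β2 := (hl2 γ).1 (by simp [hx])
    have : (f γ).isSome := (hl1 γ).2 (lt_of_lt_of_le hγ hb)
    obtain ⟨y, hy⟩ := Option.isSome_iff_exists.1 this
    have heq : x = y := Option.some_inj.1 ((h2 γ x hx).symm.trans (h1 γ y hy))
    rw [hy, heq]

section sup
variable {c : Set (PreSeq κ)}

lemma seqSup_eq_some (hc : IsChain seqLE c) {γ : Ordinal} {x : O κ} :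
    seqSup c γ = some x ↔ ∃ f ∈ c, f γ = some x := by
  classical
  constructor
  · intro h
    unfold seqSup at h
    split_ifs at h with hex
    · obtain ⟨f, hf, hfx⟩ := hex.choose_spec
      exact ⟨f, hf, by rwa [Option.some_inj.1 h] at hfx⟩
  · rintro ⟨f, hf, hfx⟩
    have hex : ∃ x, ∃ f ∈ c, f γ = some x := ⟨x, f, hf, hfx⟩
    unfold seqSup
    rw [dif_pos hex]
    congr 1
    obtain ⟨g, hg, hgx⟩ := hex.choose_spec
    -- f, g ∈ c chain, f γ = some x, g γ = some choose : values agree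
    rcases hc.total hf hg with h1 | h1
    · exact Option.some_inj.1 (hgx.symm.trans (h1 γ x hfx))
    · exact (Option.some_inj.1 (hfx.symm.trans (h1 γ _ hgx))).symm

lemma seqSup_eq_none {γ : Ordinal} (h : ∀ f ∈ c, f γ = none) : seqSup c γ = none := by
  classical
  unfold seqSup
  rw [dif_neg]
  rintro ⟨x, f, hf, hfx⟩
  rw [h f hf] at hfx; exact Option.some_ne_none _ hfx.symm

lemma le_seqSup (hc : IsChain seqLE c) {f : PreSeq κ} (hf : f ∈ c) : seqLE f (seqSup c) :=
  fun γ x hx => (seqSup_eq_some hc).2 ⟨f, hf, hx⟩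

lemma seqSup_eq_max (hc : IsChain seqLE c) {m : PreSeq κ} (hm : m ∈ c)
    (hmax : ∀ f ∈ c, seqLE f m) : seqSup c = m := by
  apply seqLE_antisymm _ (le_seqSup hc hm)
  intro γ x hx
  obtain ⟨f, hf, hfx⟩ := (seqSup_eq_some hc).1 hx
  exact hmax f hf γ x hfx

lemma seqSup_singleton (f : PreSeq κ) : seqSup {f} = f :=
  seqSup_eq_max (Set.subsingleton_singleton.isChain) rfl
    (by rintro g hg; rw [Set.mem_singleton_iff.1 hg]; exact seqLE_refl f)

lemma seqSup_cofinal (hc : IsChain seqLE c) {U : Set (PreSeq κ)} (hU : U ⊆ c)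
    (hcof : ∀ f ∈ c, ∃ g ∈ U, seqLE f g) : seqSup c = seqSup U := by
  have hcU : IsChain seqLE U := hc.mono hU
  funext γ
  cases h : seqSup U γ with
  | some x =>
    obtain ⟨f, hf, hfx⟩ := (seqSup_eq_some hcU).1 h
    exact (seqSup_eq_some hc).2 ⟨f, hU hf, hfx⟩
  | none =>
    apply seqSup_eq_none
    intro f hf
    cases hfg : f γ with
    | some x =>
      obtain ⟨g, hg, hle⟩ := hcof f hf
      have : seqSup U γ = some x := (seqSup_eq_some hcU).2 ⟨g, hg, hle γ x hfg⟩
      rw [h] at this; exact (Option.some_ne_none _ this.symm).elim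
    | none => rfl

end sup


section conc
variable {κ : Cardinal.{0}}

lemma add_lt_ord {a b : Ordinal} (hκ : ℵ₀ ≤ κ) (ha : a < κ.ord) (hb : b < κ.ord) :
    a + b < κ.ord := by
  rw [Cardinal.lt_ord] at *
  rw [Ordinal.card_add]
  exact Cardinal.add_lt_of_lt hκ ha hb

/-- concatenation: `b` on `Iio β`, then `g` shifted by `β`. -/
def conc (β : Ordinal) (b g : PreSeq κ) : PreSeq κ :=
  fun γ => if γ < β then b γ else g (γ - β)

/-- the tail of `f` beyond `β`. -/
def strip (β : Ordinal) (f : PreSeq κ) : PreSeq κ := fun δ => f (β + δ)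

lemma strip_conc (β : Ordinal) (b g : PreSeq κ) : strip β (conc β b g) = g := by
  funext δ
  simp only [strip, conc, if_neg (not_lt.2 (le_self_add (a := β) (b := δ))), Ordinal.add_sub_cancel]

lemma conc_inj {β : Ordinal} {b g g' : PreSeq κ} (h : conc β b g = conc β b g') : g = g' := by
  rw [← strip_conc β b g, ← strip_conc β b g', h]

lemma conc_strip {β : Ordinal} {b f : PreSeq κ} (hb : SeqLen b β) (hle : seqLE b f) :
    conc β b (strip β f) = f := by
  funext γ
  by_cases hγ : γ < β
  · obtain ⟨x, hx⟩ := Option.isSome_iff_exists.1 ((hb γ).2 hγ)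
    simp only [conc, if_pos hγ, hx, hle γ x hx]
  · simp only [conc, if_neg hγ, strip, Ordinal.add_sub_cancel_of_le (not_lt.1 hγ)]

lemma conc_root {β : Ordinal} {b : PreSeq κ} (hb : SeqLen b β) :
    conc β b (seqRoot κ) = b := by
  funext γ
  by_cases hγ : γ < β
  · simp only [conc, if_pos hγ]
  · simp only [conc, if_neg hγ, seqRoot]
    exact (Option.not_isSome_iff_eq_none.1 (fun hs => hγ ((hb γ).1 hs))).symm

lemma strip_of_len {β : Ordinal} {b : PreSeq κ} (hb : SeqLen b β) :
    strip β b = seqRoot κ := by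
  funext δ
  simp only [strip, seqRoot]
  exact Option.not_isSome_iff_eq_none.1
    (fun hs => absurd ((hb _).1 hs) (not_lt.2 (le_self_add (a := β) (b := δ))))

lemma seqLE_conc_left {β : Ordinal} {b : PreSeq κ} (hb : SeqLen b β) (g : PreSeq κ) :
    seqLE b (conc β b g) := by
  intro γ x hx
  have hγ : γ < β := (hb γ).1 (by simp [hx])
  simp only [conc, if_pos hγ, hx]

lemma conc_mono {β : Ordinal} (b : PreSeq κ) {g g' : PreSeq κ} (h : seqLE g g') :
    seqLE (conc β b g) (conc β b g') := by
  intro γ x hx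
  simp only [conc] at *
  split_ifs at hx ⊢ with hγ
  · exact hx
  · exact h _ x hx

lemma strip_mono {β : Ordinal} {f f' : PreSeq κ} (h : seqLE f f') :
    seqLE (strip β f) (strip β f') := fun δ x hx => h (β + δ) x hx

lemma seqLen_conc {β δ : Ordinal} {b g : PreSeq κ} (hb : SeqLen b β) (hg : SeqLen g δ) :
    SeqLen (conc β b g) (β + δ) := by
  intro γ
  by_cases hγ : γ < β
  · simp only [conc, if_pos hγ, hb γ]
    exact iff_of_true hγ (lt_of_lt_of_le hγ (le_self_add (a := β) (b := δ)))
  · simp only [conc, if_neg hγ, hg (γ - β)]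
    have hβγ : β ≤ γ := not_lt.1 hγ
    constructor
    · intro h
      calc γ = β + (γ - β) := (Ordinal.add_sub_cancel_of_le hβγ).symm
      _ < β + δ := by rwa [add_lt_add_iff_left]
    · intro h
      have : β + (γ - β) < β + δ := by rwa [Ordinal.add_sub_cancel_of_le hβγ]
      rwa [add_lt_add_iff_left] at this

lemma seqLen_strip {β β' : Ordinal} {f : PreSeq κ} (hf : SeqLen f β') (hβ : β ≤ β') :
    SeqLen (strip β f) (β' - β) := by
  intro δ
  rw [strip, hf (β + δ)]
  constructor
  · intro h
    have := Ordinal.add_sub_cancel_of_le hβ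
    rw [← Ordinal.add_sub_cancel β δ]
    calc β + δ - β < β + (β' - β) - β := by
          rw [Ordinal.add_sub_cancel, Ordinal.add_sub_cancel]
          rw [← add_lt_add_iff_left β, this]
          exact h
    _ = β' - β := by rw [Ordinal.add_sub_cancel]
  · intro h
    rw [← Ordinal.add_sub_cancel_of_le hβ]
    rwa [add_lt_add_iff_left]

lemma isSeq_conc (hκ : ℵ₀ ≤ κ) {β : Ordinal} (hβ : β < κ.ord) {b g : PreSeq κ}
    (hb : SeqLen b β) (hg : IsSeq κ g) : IsSeq κ (conc β b g) := by
  obtain ⟨δ, hδ, hlen⟩ := hg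
  exact ⟨β + δ, add_lt_ord hκ hβ hδ, seqLen_conc hb hlen⟩

lemma seqSup_ext {c : Set (PreSeq κ)} (hc : IsChain seqLE c) {m : PreSeq κ}
    (h : ∀ γ x, m γ = some x ↔ ∃ f ∈ c, f γ = some x) : seqSup c = m := by
  funext γ
  cases hm : m γ with
  | some x => exact (seqSup_eq_some hc).2 ((h γ x).1 hm)
  | none =>
    apply seqSup_eq_none
    intro f hf
    cases hfx : f γ with
    | some x =>
      have := (h γ x).2 ⟨f, hf, hfx⟩
      rw [hm] at this; exact (Option.some_ne_none _ this.symm).elim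
    | none => rfl

/-- sup commutes with conc for nonempty chains -/
lemma isChain_conc_image {β : Ordinal} (b : PreSeq κ) {d : Set (PreSeq κ)}
    (hd : IsChain seqLE d) : IsChain seqLE ((conc β b) '' d) := by
  rintro _ ⟨g, hg, rfl⟩ _ ⟨g', hg', rfl⟩ -
  rcases hd.total hg hg' with h | h
  · exact Or.inl (conc_mono b h)
  · exact Or.inr (conc_mono b h)

lemma seqSup_conc {β : Ordinal} {b : PreSeq κ} (hb : SeqLen b β)
    {d : Set (PreSeq κ)} (hd : d.Nonempty) (hch : IsChain seqLE d) :
    seqSup ((conc β b) '' d) = conc β b (seqSup d) := by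
  obtain ⟨g0, hg0⟩ := hd
  apply seqSup_ext (isChain_conc_image b hch)
  intro γ x
  by_cases hγ : γ < β
  · constructor
    · intro h
      rw [conc, if_pos hγ] at h
      exact ⟨conc β b g0, ⟨g0, hg0, rfl⟩, by rw [conc, if_pos hγ]; exact h⟩
    · rintro ⟨_, ⟨g, hg, rfl⟩, hfx⟩
      rw [conc, if_pos hγ] at hfx ⊢
      exact hfx
  · constructor
    · intro h
      rw [conc, if_neg hγ] at h
      obtain ⟨g, hg, hgx⟩ := (seqSup_eq_some hch).1 h
      exact ⟨conc β b g, ⟨g, hg, rfl⟩, by rw [conc, if_neg hγ]; exact hgx⟩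
    · rintro ⟨_, ⟨g, hg, rfl⟩, hfx⟩
      rw [conc, if_neg hγ] at hfx ⊢
      exact (seqSup_eq_some hch).2 ⟨g, hg, hfx⟩

end conc


section codes
variable {κ : Cardinal.{0}} {Z : Type 1}

lemma zero_lt_ord (hκ : ℵ₀ < κ) : (0 : Ordinal) < κ.ord := by
  rw [Cardinal.lt_ord, Ordinal.card_zero]
  exact (aleph0_pos).trans hκ

lemma one_lt_ord (hκ : ℵ₀ < κ) : (1 : Ordinal) < κ.ord := by
  rw [Cardinal.lt_ord, Ordinal.card_one]
  exact (one_lt_aleph0).trans hκ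

lemma aleph0_le_lift (hκ : ℵ₀ < κ) : ℵ₀ ≤ Cardinal.lift.{1} κ := by
  have := Cardinal.lift_le.{1}.2 hκ.le
  simpa using this

/-- code with a single node, labelled by `s` -/
def singletonCode (hκ : ℵ₀ < κ) {Basic : Set (Set Z)} {s : Set Z} (hs : s ∈ Basic) :
    BorelStarCode κ Z Basic where
  T := {seqRoot κ}
  h := fun _ => BLabel.leaf s
  mem_isSeq := by rintro f rfl; exact isSeq_root (aleph0_pos.trans hκ)
  root_mem := rfl
  downward := by rintro f rfl g _ hle; exact le_root_eq hle
  card_le := by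
    calc Cardinal.mk ↥({seqRoot κ} : Set (PreSeq κ)) = 1 := Cardinal.mk_singleton _
    _ ≤ ℵ₀ := one_le_aleph0
    _ ≤ Cardinal.lift.{1} κ := aleph0_le_lift hκ
  no_long_chain := by
    intro c hc _
    calc Cardinal.mk ↥c ≤ Cardinal.mk ↥({seqRoot κ} : Set (PreSeq κ)) :=
          Cardinal.mk_le_mk_of_subset hc
    _ = 1 := Cardinal.mk_singleton _
    _ < ℵ₀ := one_lt_aleph0
    _ ≤ Cardinal.lift.{1} κ := aleph0_le_lift hκ
  chain_sup := by
    intro c hc hne _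
    have : c = {seqRoot κ} := Set.eq_singleton_iff_nonempty_unique_mem.2 ⟨hne, hc⟩
    rw [this, seqSup_singleton]; rfl
  label_leaf := fun _ _ _ => ⟨s, hs, rfl⟩
  label_node := by
    rintro f rfl hnl
    exact absurd ⟨rfl, fun g hg _ => hg⟩ hnl

lemma reach_singletonCode (hκ : ℵ₀ < κ) {Basic : Set (Set Z)} {s : Set Z} (hs : s ∈ Basic)
    {σ : PreSeq κ → PreSeq κ} {f : PreSeq κ}
    (h : Reach (singletonCode hκ hs) σ f) : f = seqRoot κ := by
  induction h with
  | root => rfl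
  | inter f g _ hlab _ _ => exact absurd hlab (by simp [singletonCode])
  | union f _ hlab _ => exact absurd hlab (by simp [singletonCode])
  | lim c hne hch hr ih =>
    have : c = {seqRoot κ} := Set.eq_singleton_iff_nonempty_unique_mem.2 ⟨hne, ih⟩
    rw [this, seqSup_singleton]

lemma value_singletonCode (hκ : ℵ₀ < κ) {Basic : Set (Set Z)} {s : Set Z} (hs : s ∈ Basic)
    (x : Z) : IIWinsBStar (singletonCode hκ hs) x ↔ x ∈ s := by
  constructor
  · rintro ⟨σ, -, hleaf⟩
    exact hleaf (seqRoot κ) s Reach.root rfl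
  · intro hx
    refine ⟨id, ?_, ?_⟩
    · intro f hr hlab
      exact absurd hlab (by simp [singletonCode])
    · intro f s' hr hlab
      have : s' = s := by
        have h2 : BLabel.leaf (Z := Z) s = BLabel.leaf s' := hlab
        cases h2; rfl
      rw [this]; exact hx

end codes

section fan
variable {κ : Cardinal.{0}} {Z : Type 1}
variable {ι : Type} (e : ι ↪ O κ)

/-- the length-one sequence `⟨e i⟩` -/
def child (e : ι ↪ O κ) (i : ι) : PreSeq κ := fun γ => if γ = 0 then some (e i) else none

lemma seqLen_child (i : ι) : SeqLen (child e i) (1 : Ordinal) := by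
  intro γ
  by_cases hγ : γ = 0
  · subst hγ; simp [child, Ordinal.lt_one_iff_zero]
  · simp [child, hγ, Ordinal.lt_one_iff_zero]

lemma child_ne_root (i : ι) : child e i ≠ seqRoot κ := by
  intro h
  have := congrFun h 0
  simp [child, seqRoot] at this

lemma child_inj {i j : ι} (h : child e i = child e j) : i = j := by
  have := congrFun h 0
  simpa [child] using this

lemma child_le_child {i j : ι} (h : seqLE (child e i) (child e j)) : i = j := by
  have := h 0 (e i) (by simp [child])
  simp [child] at this
  exact this.symm

lemma le_child {g : PreSeq κ} (hg : IsSeq κ g) {i : ι} (h : seqLE g (child e i)) :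
    g = seqRoot κ ∨ g = child e i := by
  cases hg0 : g 0 with
  | none =>
    left
    obtain ⟨β, -, hβ⟩ := hg
    have hβ0 : ¬ (0 < β) := fun h0 => by
      have := (hβ 0).2 h0; rw [hg0] at this; simp at this
    funext γ
    have : ¬ ((g γ).isSome) := by
      rw [hβ γ]; intro hlt; exact hβ0 (lt_of_le_of_lt (zero_le (a := γ)) hlt)
    simpa [seqRoot] using Option.not_isSome_iff_eq_none.1 this
  | some x =>
    right
    funext γ
    by_cases hγ : γ = 0
    · subst hγ
      have := h 0 x hg0
      simp [child] at this
      rw [hg0, ← this]; simp [child]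
    · cases hgγ : g γ with
      | none => simp [child, hγ]
      | some y =>
        have := h γ y hgγ
        simp [child, hγ] at this

open Classical in
/-- the fan code: a root labelled `∪` (if `u`) or `∩` (if `¬u`), with immediate
successors `⟨e i⟩`, which are leaves labelled `A i`. -/
def fanCode (hκ : ℵ₀ < κ) [hne : Nonempty ι] (hι : Cardinal.mk ι ≤ κ) (e : ι ↪ O κ)
    (A : ι → Set Z) (u : Bool) : BorelStarCode κ Z (Set.range A) where
  T := {seqRoot κ} ∪ Set.range (child e)
  h := fun x =>
    if x = seqRoot κ then (if u then BLabel.union else BLabel.inter)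
    else if hx : ∃ i, x = child e i then BLabel.leaf (A hx.choose)
    else BLabel.inter
  mem_isSeq := by
    rintro f (rfl | ⟨i, rfl⟩)
    · exact isSeq_root (aleph0_pos.trans hκ)
    · exact ⟨1, one_lt_ord hκ, seqLen_child e i⟩
  root_mem := Or.inl rfl
  downward := by
    rintro f (rfl | ⟨i, rfl⟩) g hg hle
    · exact Or.inl (le_root_eq hle)
    · rcases le_child e hg hle with h | h
      · exact Or.inl h
      · exact Or.inr ⟨i, h.symm⟩
  card_le := by
    have h1 : Cardinal.mk ↥({seqRoot κ} : Set (PreSeq κ)) ≤ Cardinal.lift.{1} κ := by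
      rw [Cardinal.mk_singleton]
      exact one_le_aleph0.trans (aleph0_le_lift hκ)
    have h2 : Cardinal.mk ↥(Set.range (child e)) ≤ Cardinal.lift.{1} κ := by
      calc Cardinal.mk ↥(Set.range (child e)) ≤ Cardinal.lift.{1} (Cardinal.mk ι) := by
            simpa using Cardinal.mk_range_le_lift (f := child e)
      _ ≤ Cardinal.lift.{1} κ := Cardinal.lift_le.2 hι
    calc Cardinal.mk ↥({seqRoot κ} ∪ Set.range (child e) : Set (PreSeq κ))
        ≤ Cardinal.mk ↥({seqRoot κ} : Set (PreSeq κ)) + Cardinal.mk ↥(Set.range (child e)) :=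
          Cardinal.mk_union_le _ _
    _ ≤ Cardinal.lift.{1} κ + Cardinal.lift.{1} κ := add_le_add h1 h2
    _ = Cardinal.lift.{1} κ := Cardinal.add_eq_self (aleph0_le_lift hκ)
  no_long_chain := by
    intro c hc hch
    have hle2 : Cardinal.mk ↥c ≤ 2 := by
      by_cases hex : ∃ i, child e i ∈ c
      · obtain ⟨i, hi⟩ := hex
        have hsub : c ⊆ {seqRoot κ, child e i} := by
          rintro y hy
          rcases hc hy with rfl | ⟨j, rfl⟩
          · exact Or.inl rfl
          · rcases hch.total hy hi with h | h
            · rw [child_le_child e h]; exact Or.inr rfl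
            · rw [← child_le_child e h]; exact Or.inr rfl
        calc Cardinal.mk ↥c ≤ Cardinal.mk ↥({seqRoot κ, child e i} : Set (PreSeq κ)) :=
              Cardinal.mk_le_mk_of_subset hsub
        _ ≤ 2 := by
            have := Cardinal.mk_insert_le (s := ({child e i} : Set (PreSeq κ))) (a := seqRoot κ)
            rw [Cardinal.mk_singleton] at this
            exact this.trans (by norm_num)
      · have hsub : c ⊆ {seqRoot κ} := by
          rintro y hy
          rcases hc hy with rfl | ⟨j, rfl⟩
          · rfl
          · exact absurd ⟨j, hy⟩ hex
        calc Cardinal.mk ↥c ≤ 1 := by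
              rw [← Cardinal.mk_singleton (seqRoot κ)]
              exact Cardinal.mk_le_mk_of_subset hsub
        _ ≤ 2 := one_le_two
    calc Cardinal.mk ↥c ≤ 2 := hle2
    _ < ℵ₀ := Cardinal.nat_lt_aleph0 2
    _ ≤ Cardinal.lift.{1} κ := aleph0_le_lift hκ
  chain_sup := by
    intro c hc hne hch
    by_cases hex : ∃ i, child e i ∈ c
    · obtain ⟨i, hi⟩ := hex
      have hmax : ∀ f ∈ c, seqLE f (child e i) := by
        intro f hf
        rcases hc hf with rfl | ⟨j, rfl⟩
        · exact seqRoot_le _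
        · rcases hch.total hf hi with h | h
          · exact h
          · cases child_le_child e h
            exact seqLE_refl _
      rw [seqSup_eq_max hch hi hmax]
      exact Or.inr ⟨i, rfl⟩
    · have : c = {seqRoot κ} := by
        apply Set.eq_singleton_iff_nonempty_unique_mem.2 ⟨hne, ?_⟩
        intro y hy
        rcases hc hy with rfl | ⟨j, rfl⟩
        · rfl
        · exact absurd ⟨j, hy⟩ hex
      rw [this, seqSup_singleton]
      exact Or.inl rfl
  label_leaf := by
    rintro f hf hleaf
    rcases hf with rfl | ⟨i, rfl⟩
    · obtain ⟨i⟩ := hne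
      exact absurd (hleaf.2 (child e i) (Or.inr ⟨i, rfl⟩) (seqRoot_le _))
        (child_ne_root e i)
    · have hex : ∃ j, child e i = child e j := ⟨i, rfl⟩
      refine ⟨A hex.choose, ⟨hex.choose, rfl⟩, ?_⟩
      rw [if_neg (child_ne_root e i), dif_pos hex]
  label_node := by
    rintro f hf hnl
    rcases hf with rfl | ⟨i, rfl⟩
    · rw [if_pos rfl]
      cases u
      · exact Or.inl rfl
      · exact Or.inr rfl
    · exfalso
      apply hnl
      refine ⟨Or.inr ⟨i, rfl⟩, ?_⟩
      rintro g (rfl | ⟨j, rfl⟩) hle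
      · have := hle 0 (e i) (by simp [child])
        simp [seqRoot] at this
      · rw [← child_le_child e hle]

end fan

section fanvalue
variable {κ : Cardinal.{0}} {Z : Type 1}
variable {ι : Type} [hne : Nonempty ι] {e : ι ↪ O κ} {A : ι → Set Z}
  (hκ : ℵ₀ < κ) (hι : Cardinal.mk ι ≤ κ)

lemma fan_h_root {u : Bool} :
    (fanCode hκ hι e A u).h (seqRoot κ) = if u then BLabel.union else BLabel.inter := by
  simp only [fanCode, if_true, eq_self_iff_true]

lemma fan_h_child {u : Bool} (i : ι) :
    (fanCode hκ hι e A u).h (child e i) = BLabel.leaf (A i) := by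
  classical
  have hex : ∃ j, child e i = child e j := ⟨i, rfl⟩
  simp only [fanCode]
  rw [if_neg (child_ne_root e i), dif_pos hex]
  congr 1
  have : i = hex.choose := child_inj e hex.choose_spec
  rw [← this]

lemma fan_immSucc_root {u : Bool} (i : ι) :
    ImmSucc (fanCode hκ hι e A u).T (seqRoot κ) (child e i) := by
  refine ⟨Or.inr ⟨i, rfl⟩, seqRoot_le _, (Ne.symm (child_ne_root e i)), ?_⟩
  rintro g (rfl | ⟨j, rfl⟩) h1 h2
  · exact Or.inl rfl
  · right
    cases child_le_child e h2
    rfl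

lemma fan_immSucc_root_inv {u : Bool} {g : PreSeq κ}
    (h : ImmSucc (fanCode hκ hι e A u).T (seqRoot κ) g) : ∃ i, g = child e i := by
  rcases h.1 with rfl | ⟨i, rfl⟩
  · exact absurd rfl h.2.2.1
  · exact ⟨i, rfl⟩

lemma value_fan_union (x : Z) :
    IIWinsBStar (fanCode hκ hι e A true) x ↔ ∃ i, x ∈ A i := by
  constructor
  · rintro ⟨σ, hu, hl⟩
    have hroot : (fanCode hκ hι e A true).h (seqRoot κ) = BLabel.union := fan_h_root hκ hι
    have h1 := hu (seqRoot κ) Reach.root hroot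
    obtain ⟨i, hi⟩ := fan_immSucc_root_inv hκ hι h1
    have h2 : Reach (fanCode hκ hι e A true) σ (child e i) := by
      rw [← hi]; exact Reach.union _ Reach.root hroot
    exact ⟨i, hl _ (A i) h2 (fan_h_child hκ hι i)⟩
  · rintro ⟨i0, hx⟩
    refine ⟨fun _ => child e i0, ?_, ?_⟩
    all_goals {
      have key : ∀ f, Reach (fanCode hκ hι e A true) (fun _ => child e i0) f →
          f = seqRoot κ ∨ f = child e i0 := by
        intro f hf
        induction hf with
        | root => exact Or.inl rfl
        | inter f g hr hlab hsucc ih =>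
          rcases ih with rfl | rfl
          · rw [fan_h_root hκ hι] at hlab; simp at hlab
          · rw [fan_h_child hκ hι i0] at hlab; simp at hlab
        | union f hr hlab ih => exact Or.inr rfl
        | lim c hcne hch hr ih =>
          by_cases hc0 : child e i0 ∈ c
          · right
            apply seqSup_eq_max hch hc0
            intro f hf
            rcases ih f hf with rfl | rfl
            · exact seqRoot_le _
            · exact seqLE_refl _
          · left
            apply seqSup_eq_max hch ?_ ?_
            · obtain ⟨f, hf⟩ := hcne
              rcases ih f hf with rfl | rfl
              · exact hf
              · exact absurd hf hc0
            · intro f hf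
              rcases ih f hf with rfl | rfl
              · exact seqLE_refl _
              · exact absurd hf hc0
      first
      | { -- strategy plays immediate successors at union nodes
          intro f hr hlab
          rcases key f hr with rfl | rfl
          · exact fan_immSucc_root hκ hι i0
          · rw [fan_h_child hκ hι i0] at hlab; simp at hlab }
      | { -- leaves reached contain x
          intro f s hr hlab
          rcases key f hr with rfl | rfl
          · rw [fan_h_root hκ hι] at hlab; simp at hlab
          · rw [fan_h_child hκ hι i0] at hlab
            have : A i0 = s := by cases hlab; rfl
            rw [← this]; exact hx } }

lemma value_fan_inter (x : Z) :
    IIWinsBStar (fanCode hκ hι e A false) x ↔ ∀ i, x ∈ A i := by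
  constructor
  · rintro ⟨σ, hu, hl⟩ i
    have hroot : (fanCode hκ hι e A false).h (seqRoot κ) = BLabel.inter := fan_h_root hκ hι
    have h2 : Reach (fanCode hκ hι e A false) σ (child e i) :=
      Reach.inter _ _ Reach.root hroot (fan_immSucc_root hκ hι i)
    exact hl _ (A i) h2 (fan_h_child hκ hι i)
  · intro hx
    refine ⟨id, ?_, ?_⟩
    all_goals {
      have key : ∀ f, Reach (fanCode hκ hι e A false) id f →
          f ∈ (fanCode hκ hι e A false).T := by
        intro f hf
        induction hf with
        | root => exact (fanCode hκ hι e A false).root_mem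
        | inter f g hr hlab hsucc ih => exact hsucc.1
        | union f hr hlab ih =>
          exfalso
          rcases ih with rfl | ⟨i, rfl⟩
          · rw [fan_h_root hκ hι] at hlab; simp at hlab
          · rw [fan_h_child hκ hι i] at hlab; simp at hlab
        | lim c hcne hch hr ih =>
          exact (fanCode hκ hι e A false).chain_sup c ih hcne hch
      first
      | { intro f hr hlab
          exfalso
          rcases key f hr with rfl | ⟨i, rfl⟩
          · rw [fan_h_root hκ hι] at hlab; simp at hlab
          · rw [fan_h_child hκ hι i] at hlab; simp at hlab }
      | { intro f s hr hlab
          rcases key f hr with rfl | ⟨i, rfl⟩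
          · rw [fan_h_root hκ hι] at hlab; simp at hlab
          · rw [fan_h_child hκ hι i] at hlab
            have : A i = s := by cases hlab; rfl
            rw [← this]; exact hx i } }

end fanvalue

section graft
variable {κ : Cardinal.{0}} {Z : Type 1} {Basic Basic' : Set (Set Z)}
variable (code : BorelStarCode κ Z Basic) (len : PreSeq κ → Ordinal)
  (D : PreSeq κ → BorelStarCode κ Z Basic')

/-- the copy of the tree of `D b` grafted on top of the leaf `b` -/
def graftSet (len : PreSeq κ → Ordinal) (D : PreSeq κ → BorelStarCode κ Z Basic')
    (b : PreSeq κ) : Set (PreSeq κ) := (conc (len b) b) '' (D b).T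

/-- the grafted tree -/
def GTree : Set (PreSeq κ) :=
  code.T ∪ ⋃ b ∈ {b | IsLeaf code.T b}, graftSet len D b

/-- `p` lies in one of the grafted copies -/
def InGraft (p : PreSeq κ) : Prop :=
  ∃ b, IsLeaf code.T b ∧ ∃ g ∈ (D b).T, p = conc (len b) b g

/-- the labelling of the grafted tree -/
def Gh : PreSeq κ → BLabel Z := fun p =>
  open scoped Classical in
  if hp : InGraft code len D p then (D hp.choose).h (strip (len hp.choose) p)
  else code.h p

variable {code len D}
variable (hlen : ∀ b ∈ code.T, SeqLen b (len b) ∧ len b < κ.ord)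

section basiclemmas
include hlen

lemma le_conc_of_leaf {b : PreSeq κ} (hb : b ∈ code.T) (g : PreSeq κ) :
    seqLE b (conc (len b) b g) :=
  seqLE_conc_left (hlen b hb).1 g

lemma leaf_eq_of_comparable {b b' : PreSeq κ} (hb : IsLeaf code.T b) (hb' : IsLeaf code.T b')
    (h : seqLE b b' ∨ seqLE b' b) : b = b' := by
  rcases h with h | h
  · exact (hb.2 b' hb'.1 h).symm
  · exact hb'.2 b hb.1 h

lemma decomp_b_unique {b b' g g' : PreSeq κ} (hb : IsLeaf code.T b) (hb' : IsLeaf code.T b')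
    (heq : conc (len b) b g = conc (len b') b' g') : b = b' := by
  apply leaf_eq_of_comparable hlen hb hb'
  apply seq_comparable (code.mem_isSeq b hb.1) (code.mem_isSeq b' hb'.1)
    (h := conc (len b) b g)
  · exact le_conc_of_leaf hlen hb.1 g
  · rw [heq]; exact le_conc_of_leaf hlen hb'.1 g'

lemma mem_GT_of_graft {b g : PreSeq κ} (hb : IsLeaf code.T b) (hg : g ∈ (D b).T) :
    conc (len b) b g ∈ GTree code len D :=
  Or.inr (Set.mem_biUnion hb ⟨g, hg, rfl⟩)

omit hlen in
lemma mem_GT_elim {p : PreSeq κ} (hp : p ∈ GTree code len D) :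
    p ∈ code.T ∨ ∃ b g, IsLeaf code.T b ∧ g ∈ (D b).T ∧ p = conc (len b) b g := by
  rcases hp with hp | hp
  · exact Or.inl hp
  · obtain ⟨b, hb, g, hg, heq⟩ := by
      simpa [graftSet, Set.mem_iUnion] using hp
    exact Or.inr ⟨b, g, hb, hg, heq.symm⟩

lemma Gh_graft {b g : PreSeq κ} (hb : IsLeaf code.T b) (hg : g ∈ (D b).T) :
    Gh code len D (conc (len b) b g) = (D b).h g := by
  have hp : InGraft code len D (conc (len b) b g) := ⟨b, hb, g, hg, rfl⟩
  rw [Gh, dif_pos hp]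
  obtain ⟨hb', g', hg', heq⟩ := hp.choose_spec
  have hbb : hp.choose = b := (decomp_b_unique hlen hb hb' heq).symm
  rw [hbb, strip_conc]

lemma not_inGraft {p : PreSeq κ} (hp : p ∈ code.T) (hnl : ¬ IsLeaf code.T p) :
    ¬ InGraft code len D p := by
  rintro ⟨b, hb, g, hg, rfl⟩
  exact hnl (by rw [hb.2 _ hp (le_conc_of_leaf hlen hb.1 g)]; exact hb)

lemma Gh_base {p : PreSeq κ} (hp : p ∈ code.T) (hnl : ¬ IsLeaf code.T p) :
    Gh code len D p = code.h p := by
  rw [Gh, dif_neg (not_inGraft hlen hp hnl)]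

lemma mem_graft_of_le {b p : PreSeq κ} (hb : IsLeaf code.T b) (hp : p ∈ GTree code len D)
    (hle : seqLE b p) : ∃ g ∈ (D b).T, p = conc (len b) b g := by
  rcases mem_GT_elim hp with hpT | ⟨b', g', hb', hg', rfl⟩
  · refine ⟨seqRoot κ, (D b).root_mem, ?_⟩
    rw [conc_root (hlen b hb.1).1]
    exact hb.2 p hpT hle
  · have hbb : b = b' := by
      apply leaf_eq_of_comparable hlen hb hb'
      apply seq_comparable (code.mem_isSeq b hb.1) (code.mem_isSeq b' hb'.1)
        (h := conc (len b') b' g') hle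
      exact le_conc_of_leaf hlen hb'.1 g'
    subst hbb
    exact ⟨g', hg', rfl⟩

/-- a grafted element below an element of the base tree collapses -/
lemma graft_le_base {b g q : PreSeq κ} (hb : IsLeaf code.T b) (hq : q ∈ code.T)
    (hle : seqLE (conc (len b) b g) q) : q = b ∧ conc (len b) b g = b := by
  have hbq : seqLE b q := seqLE_trans (le_conc_of_leaf hlen hb.1 g) hle
  have h1 : q = b := hb.2 q hq hbq
  subst h1
  exact ⟨rfl, seqLE_antisymm hle (seqLE_trans hbq (le_conc_of_leaf hlen hb.1 g))⟩

end basiclemmas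
end graft

section graft2
variable {κ : Cardinal.{0}} {Z : Type 1} {Basic Basic' : Set (Set Z)}
variable {code : BorelStarCode κ Z Basic} {len : PreSeq κ → Ordinal}
  {D : PreSeq κ → BorelStarCode κ Z Basic'}
variable (hlen : ∀ b ∈ code.T, SeqLen b (len b) ∧ len b < κ.ord)

include hlen

/-- an immediate successor in the base tree is one in the grafted tree -/
lemma immSucc_GT_of_base {p q : PreSeq κ} (h : ImmSucc code.T p q) :
    ImmSucc (GTree code len D) p q := by
  refine ⟨Or.inl h.1, h.2.1, h.2.2.1, ?_⟩
  intro w hw h1 h2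
  rcases mem_GT_elim hw with hwT | ⟨b, g, hb, hg, rfl⟩
  · exact h.2.2.2 w hwT h1 h2
  · right
    obtain ⟨hqb, hwb⟩ := graft_le_base hlen hb h.1 h2
    rw [hwb, hqb]

/-- conversely, an immediate successor of a non-leaf base node lies in the base tree -/
lemma immSucc_base_of_GT {p q : PreSeq κ} (hp : p ∈ code.T) (hnl : ¬ IsLeaf code.T p)
    (h : ImmSucc (GTree code len D) p q) : q ∈ code.T ∧ ImmSucc code.T p q := by
  have hq : q ∈ code.T := by
    rcases mem_GT_elim h.1 with hq | ⟨b, g, hb, hg, rfl⟩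
    · exact hq
    · -- p ≤ conc b g, b between p and the graft
      have hbq : seqLE b (conc (len b) b g) := le_conc_of_leaf hlen hb.1 g
      have hpb : seqLE p b ∨ seqLE b p :=
        seq_comparable (code.mem_isSeq p hp) (code.mem_isSeq b hb.1) h.2.1 hbq
      rcases hpb with hpb | hbp
      · rcases h.2.2.2 b (Or.inl hb.1) hpb hbq with hbp | hbq'
        · exact absurd (hbp ▸ hb) hnl
        · rw [← hbq']; exact hb.1
      · exact absurd ((hb.2 p hp hbp).symm ▸ hb) hnl
  refine ⟨hq, hq, h.2.1, h.2.2.1, ?_⟩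
  intro w hw h1 h2
  exact h.2.2.2 w (Or.inl hw) h1 h2

/-- immediate successors inside a grafted copy -/
lemma immSucc_GT_graft {b g g' : PreSeq κ} (hb : IsLeaf code.T b)
    (h : ImmSucc (D b).T g g') :
    ImmSucc (GTree code len D) (conc (len b) b g) (conc (len b) b g') := by
  refine ⟨mem_GT_of_graft hlen hb h.1, conc_mono b h.2.1, ?_, ?_⟩
  · intro heq; exact h.2.2.1 (conc_inj heq)
  · intro w hw h1 h2
    have hbw : seqLE b w :=
      seqLE_trans (le_conc_of_leaf hlen hb.1 g) h1
    obtain ⟨g2, hg2, rfl⟩ := mem_graft_of_le hlen hb hw hbw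
    have e1 : seqLE g g2 := by
      have := strip_mono (β := len b) h1
      rwa [strip_conc, strip_conc] at this
    have e2 : seqLE g2 g' := by
      have := strip_mono (β := len b) h2
      rwa [strip_conc, strip_conc] at this
    rcases h.2.2.2 g2 hg2 e1 e2 with rfl | rfl
    · exact Or.inl rfl
    · exact Or.inr rfl

/-- conversely, immediate successors of grafted nodes stay in the same copy -/
lemma immSucc_graft_of_GT {b g q : PreSeq κ} (hb : IsLeaf code.T b) (hg : g ∈ (D b).T)
    (h : ImmSucc (GTree code len D) (conc (len b) b g) q) :
    ∃ g', ImmSucc (D b).T g g' ∧ q = conc (len b) b g' := by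
  have hbq : seqLE b q := seqLE_trans (le_conc_of_leaf hlen hb.1 g) h.2.1
  obtain ⟨g', hg', rfl⟩ := mem_graft_of_le hlen hb h.1 hbq
  refine ⟨g', ⟨hg', ?_, ?_, ?_⟩, rfl⟩
  · have := strip_mono (β := len b) h.2.1
    rwa [strip_conc, strip_conc] at this
  · intro heq; exact h.2.2.1 (heq ▸ rfl)
  · intro h2 hh2 e1 e2
    rcases h.2.2.2 (conc (len b) b h2) (mem_GT_of_graft hlen hb hh2)
      (conc_mono b e1) (conc_mono b e2) with he | he
    · exact Or.inl (conc_inj he)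
    · exact Or.inr (conc_inj he)

/-- structure of the supremum of a chain which enters a grafted copy -/
lemma chain_sup_structure {b p0 : PreSeq κ} {c : Set (PreSeq κ)} (hb : IsLeaf code.T b)
    (hc : c ⊆ GTree code len D) (hch : IsChain seqLE c) (hp0 : p0 ∈ c)
    (hble : seqLE b p0) :
    ∃ d, d ⊆ (D b).T ∧ d.Nonempty ∧ IsChain seqLE d ∧
      seqSup c = conc (len b) b (seqSup d) ∧ ∀ g ∈ d, conc (len b) b g ∈ c := by
  classical
  set U : Set (PreSeq κ) := {p ∈ c | seqLE b p} with hU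
  have hUc : U ⊆ c := fun p hp => hp.1
  have hp0U : p0 ∈ U := ⟨hp0, hble⟩
  have hcof : ∀ p ∈ c, ∃ q ∈ U, seqLE p q := by
    intro p hp
    rcases hch.total hp hp0 with h | h
    · exact ⟨p0, hp0U, h⟩
    · exact ⟨p, ⟨hp, seqLE_trans hble h⟩, seqLE_refl p⟩
  set d : Set (PreSeq κ) := (strip (len b)) '' U with hd
  have hdec : ∀ p ∈ U, p = conc (len b) b (strip (len b) p) := by
    intro p hp
    obtain ⟨g, hg, rfl⟩ := mem_graft_of_le hlen hb (hc (hUc hp)) hp.2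
    rw [strip_conc]
  have hdT : d ⊆ (D b).T := by
    rintro _ ⟨p, hp, rfl⟩
    obtain ⟨g, hg, rfl⟩ := mem_graft_of_le hlen hb (hc (hUc hp)) hp.2
    rwa [strip_conc]
  have hdch : IsChain seqLE d := by
    rintro _ ⟨p, hp, rfl⟩ _ ⟨q, hq, rfl⟩ -
    rcases hch.total (hUc hp) (hUc hq) with h | h
    · exact Or.inl (strip_mono h)
    · exact Or.inr (strip_mono h)
  have hUd : U = (conc (len b) b) '' d := by
    apply Set.Subset.antisymm
    · intro p hp
      exact ⟨strip (len b) p, ⟨p, hp, rfl⟩, (hdec p hp).symm⟩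
    · rintro _ ⟨_, ⟨p, hp, rfl⟩, rfl⟩
      rwa [← hdec p hp]
  refine ⟨d, hdT, ⟨strip (len b) p0, p0, hp0U, rfl⟩, hdch, ?_, ?_⟩
  · rw [seqSup_cofinal hch hUc hcof, hUd, seqSup_conc (hlen b hb.1).1 _ hdch]
    exact ⟨strip (len b) p0, p0, hp0U, rfl⟩
  · rintro _ ⟨p, hp, rfl⟩
    rw [← hdec p hp]
    exact hUc hp

end graft2

section graft3
variable {κ : Cardinal.{0}} {Z : Type 1} {Basic Basic' : Set (Set Z)}
variable {code : BorelStarCode κ Z Basic} {len : PreSeq κ → Ordinal}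
  {D : PreSeq κ → BorelStarCode κ Z Basic'}
variable (hlen : ∀ b ∈ code.T, SeqLen b (len b) ∧ len b < κ.ord)

include hlen

lemma isLeaf_D_of_GT {b g : PreSeq κ} (hb : IsLeaf code.T b) (hg : g ∈ (D b).T)
    (hleaf : IsLeaf (GTree code len D) (conc (len b) b g)) : IsLeaf (D b).T g := by
  refine ⟨hg, fun g2 hg2 hle => ?_⟩
  exact conc_inj (hleaf.2 (conc (len b) b g2) (mem_GT_of_graft hlen hb hg2) (conc_mono b hle))

lemma isLeaf_GT_of_D {b g : PreSeq κ} (hb : IsLeaf code.T b) (hg : g ∈ (D b).T)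
    (hgleaf : IsLeaf (D b).T g) : IsLeaf (GTree code len D) (conc (len b) b g) := by
  refine ⟨mem_GT_of_graft hlen hb hg, fun w hw hle => ?_⟩
  have hbw : seqLE b w := seqLE_trans (le_conc_of_leaf hlen hb.1 g) hle
  obtain ⟨g2, hg2, rfl⟩ := mem_graft_of_le hlen hb hw hbw
  have e1 : seqLE g g2 := by
    have := strip_mono (β := len b) hle
    rwa [strip_conc, strip_conc] at this
  rw [hgleaf.2 g2 hg2 e1]

lemma Gh_leafbase {p : PreSeq κ} (hp : IsLeaf code.T p) :
    Gh code len D p = (D p).h (seqRoot κ) := by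
  have := Gh_graft hlen (g := seqRoot κ) hp (D p).root_mem
  rwa [conc_root (hlen p hp.1).1] at this

/-- the grafted code -/
def graftCode (hκ : ℵ₀ < κ) : BorelStarCode κ Z Basic' where
  T := GTree code len D
  h := Gh code len D
  mem_isSeq := by
    intro p hp
    rcases mem_GT_elim hp with hpT | ⟨b, g, hb, hg, rfl⟩
    · exact code.mem_isSeq p hpT
    · exact isSeq_conc hκ.le (hlen b hb.1).2 (hlen b hb.1).1 ((D b).mem_isSeq g hg)
  root_mem := Or.inl code.root_mem
  downward := by
    intro p hp q hq hle
    rcases mem_GT_elim hp with hpT | ⟨b, g, hb, hg, rfl⟩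
    · exact Or.inl (code.downward p hpT q hq hle)
    · have hcomp := seq_comparable hq (code.mem_isSeq b hb.1) hle
        (le_conc_of_leaf hlen hb.1 g)
      rcases hcomp with hqb | hbq
      · exact Or.inl (code.downward b hb.1 q hq hqb)
      · have hq' : q = conc (len b) b (strip (len b) q) :=
          (conc_strip (hlen b hb.1).1 hbq).symm
        have hstrip_le : seqLE (strip (len b) q) g := by
          have := strip_mono (β := len b) hle
          rwa [strip_conc] at this
        have hstrip_seq : IsSeq κ (strip (len b) q) := by
          obtain ⟨β', hβ', hlen'⟩ := hq
          have hlb : len b ≤ β' := by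
            by_contra hlt
            push_neg at hlt
            have h1 : (b β').isSome := ((hlen b hb.1).1 β').2 hlt
            obtain ⟨y, hy⟩ := Option.isSome_iff_exists.1 h1
            have h2 : (q β').isSome := by rw [hbq β' y hy]; rfl
            exact absurd ((hlen' β').1 h2) (lt_irrefl β')
          exact ⟨β' - len b, lt_of_le_of_lt (Ordinal.sub_le_self β' (len b)) hβ',
            seqLen_strip hlen' hlb⟩
        have : strip (len b) q ∈ (D b).T :=
          (D b).downward g hg (strip (len b) q) hstrip_seq hstrip_le
        right
        rw [hq']
        exact Set.mem_biUnion hb ⟨strip (len b) q, this, rfl⟩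
  card_le := by
    have h1 : Cardinal.mk ↥(⋃ b ∈ {b | IsLeaf code.T b}, graftSet len D b) ≤
        Cardinal.lift.{1} κ := by
      calc Cardinal.mk ↥(⋃ b ∈ {b | IsLeaf code.T b}, graftSet len D b)
          ≤ Cardinal.mk ↥{b | IsLeaf code.T b} * ⨆ b : ↥{b | IsLeaf code.T b},
            Cardinal.mk ↥(graftSet len D b.1) := Cardinal.mk_biUnion_le _ _
      _ ≤ Cardinal.lift.{1} κ * Cardinal.lift.{1} κ := by
          apply mul_le_mul'
          · exact (Cardinal.mk_le_mk_of_subset (fun b hb => hb.1)).trans code.card_le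
          · apply csSup_le'
            rintro - ⟨b, rfl⟩
            exact (Cardinal.mk_image_le).trans (D b.1).card_le
      _ = Cardinal.lift.{1} κ := Cardinal.mul_eq_self (aleph0_le_lift hκ)
    calc Cardinal.mk ↥(GTree code len D)
        ≤ Cardinal.mk ↥code.T + Cardinal.mk ↥(⋃ b ∈ {b | IsLeaf code.T b}, graftSet len D b) :=
          Cardinal.mk_union_le _ _
    _ ≤ Cardinal.lift.{1} κ + Cardinal.lift.{1} κ := add_le_add code.card_le h1
    _ = Cardinal.lift.{1} κ := Cardinal.add_eq_self (aleph0_le_lift hκ)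
  no_long_chain := by
    intro c hc hch
    by_cases hsub : c ⊆ code.T
    · exact code.no_long_chain c hsub hch
    · obtain ⟨p0, hp0c, hp0T⟩ := not_subset.1 hsub
      obtain ⟨b, g0, hb, hg0, rfl⟩ := (mem_GT_elim (hc hp0c)).resolve_left hp0T
      -- every element of c outside the base tree lies in the graft over b
      have hkey : ∀ p ∈ c, p ∉ code.T → ∃ g ∈ (D b).T, p = conc (len b) b g := by
        intro p hpc hpT
        obtain ⟨b', g', hb', hg', rfl⟩ := (mem_GT_elim (hc hpc)).resolve_left hpT
        have hbb : b = b' := by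
          rcases hch.total hpc hp0c with h | h
          · apply leaf_eq_of_comparable hlen hb hb'
            apply seq_comparable (code.mem_isSeq b hb.1) (code.mem_isSeq b' hb'.1)
              (h := conc (len b) b g0) (le_conc_of_leaf hlen hb.1 g0)
            exact seqLE_trans (le_conc_of_leaf hlen hb'.1 g') h
          · apply leaf_eq_of_comparable hlen hb hb'
            apply seq_comparable (code.mem_isSeq b hb.1) (code.mem_isSeq b' hb'.1)
              (h := conc (len b') b' g')
              (seqLE_trans (le_conc_of_leaf hlen hb.1 g0) h)
            exact le_conc_of_leaf hlen hb'.1 g'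
        subst hbb
        exact ⟨g', hg', rfl⟩
      set d : Set (PreSeq κ) := (strip (len b)) '' (c \ code.T) with hd
      have hdT : d ⊆ (D b).T := by
        rintro - ⟨p, hp, rfl⟩
        obtain ⟨g, hg, rfl⟩ := hkey p hp.1 hp.2
        rwa [strip_conc]
      have hdch : IsChain seqLE d := by
        rintro - ⟨p, hp, rfl⟩ - ⟨q, hq, rfl⟩ -
        rcases hch.total hp.1 hq.1 with h | h
        · exact Or.inl (strip_mono h)
        · exact Or.inr (strip_mono h)
      have hdiff : Cardinal.mk ↥(c \ code.T : Set (PreSeq κ)) ≤ Cardinal.mk ↥d := by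
        have : (c \ code.T : Set (PreSeq κ)) ⊆ (conc (len b) b) '' d := by
          intro p hp
          obtain ⟨g, hg, rfl⟩ := hkey p hp.1 hp.2
          exact ⟨g, ⟨conc (len b) b g, hp, (strip_conc _ _ _)⟩, rfl⟩
        exact (Cardinal.mk_le_mk_of_subset this).trans Cardinal.mk_image_le
      have hc1 : Cardinal.mk ↥(c ∩ code.T : Set (PreSeq κ)) < Cardinal.lift.{1} κ :=
        code.no_long_chain _ (Set.inter_subset_right)
          (hch.mono (Set.inter_subset_left))
      have hc2 : Cardinal.mk ↥(c \ code.T : Set (PreSeq κ)) < Cardinal.lift.{1} κ :=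
        lt_of_le_of_lt hdiff ((D b).no_long_chain d hdT hdch)
      have hcu : c = (c ∩ code.T) ∪ (c \ code.T) := (Set.inter_union_diff c code.T).symm
      calc Cardinal.mk ↥c = Cardinal.mk ↥((c ∩ code.T) ∪ (c \ code.T) : Set (PreSeq κ)) := by
            rw [← hcu]
      _ ≤ Cardinal.mk ↥(c ∩ code.T : Set (PreSeq κ)) +
          Cardinal.mk ↥(c \ code.T : Set (PreSeq κ)) := Cardinal.mk_union_le _ _
      _ < Cardinal.lift.{1} κ := Cardinal.add_lt_of_lt (aleph0_le_lift hκ) hc1 hc2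
  chain_sup := by
    intro c hc hne hch
    by_cases hsub : c ⊆ code.T
    · exact Or.inl (code.chain_sup c hsub hne hch)
    · obtain ⟨p0, hp0c, hp0T⟩ := not_subset.1 hsub
      obtain ⟨b, g0, hb, hg0, heq⟩ := (mem_GT_elim (hc hp0c)).resolve_left hp0T
      have hble : seqLE b p0 := by rw [heq]; exact le_conc_of_leaf hlen hb.1 g0
      obtain ⟨d, hdT, hdne, hdch, hsup, -⟩ := chain_sup_structure hlen hb hc hch hp0c hble
      rw [hsup]
      exact mem_GT_of_graft hlen hb ((D b).chain_sup d hdT hdne hdch)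
  label_leaf := by
    intro p hp hleaf
    rcases mem_GT_elim hp with hpT | ⟨b, g, hb, hg, rfl⟩
    · have hpl : IsLeaf code.T p := ⟨hpT, fun w hw hle => hleaf.2 w (Or.inl hw) hle⟩
      have hrl : IsLeaf (D p).T (seqRoot κ) := by
        apply isLeaf_D_of_GT hlen hpl (D p).root_mem
        rwa [conc_root (hlen p hpT).1]
      obtain ⟨s, hs, hlab⟩ := (D p).label_leaf (seqRoot κ) (D p).root_mem hrl
      exact ⟨s, hs, by rw [Gh_leafbase hlen hpl, hlab]⟩
    · have hgl : IsLeaf (D b).T g := isLeaf_D_of_GT hlen hb hg hleaf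
      obtain ⟨s, hs, hlab⟩ := (D b).label_leaf g hg hgl
      exact ⟨s, hs, by rw [Gh_graft hlen hb hg, hlab]⟩
  label_node := by
    intro p hp hnl
    rcases mem_GT_elim hp with hpT | ⟨b, g, hb, hg, rfl⟩
    · by_cases hpl : IsLeaf code.T p
      · have hrnl : ¬ IsLeaf (D p).T (seqRoot κ) := by
          intro hrl
          apply hnl
          have := isLeaf_GT_of_D hlen hpl (D p).root_mem hrl
          rwa [conc_root (hlen p hpT).1] at this
        rcases (D p).label_node (seqRoot κ) (D p).root_mem hrnl with hlab | hlab
        · exact Or.inl (by rw [Gh_leafbase hlen hpl, hlab])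
        · exact Or.inr (by rw [Gh_leafbase hlen hpl, hlab])
      · rcases code.label_node p hpT hpl with hlab | hlab
        · exact Or.inl (by rw [Gh_base hlen hpT hpl, hlab])
        · exact Or.inr (by rw [Gh_base hlen hpT hpl, hlab])
    · have hgnl : ¬ IsLeaf (D b).T g := fun hgl => hnl (isLeaf_GT_of_D hlen hb hg hgl)
      rcases (D b).label_node g hg hgnl with hlab | hlab
      · exact Or.inl (by rw [Gh_graft hlen hb hg, hlab])
      · exact Or.inr (by rw [Gh_graft hlen hb hg, hlab])

end graft3

section graft4
variable {κ : Cardinal.{0}} {Z : Type 1} {Basic Basic' : Set (Set Z)}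
variable {code : BorelStarCode κ Z Basic} {len : PreSeq κ → Ordinal}
  {D : PreSeq κ → BorelStarCode κ Z Basic'}
variable (hlen : ∀ b ∈ code.T, SeqLen b (len b) ∧ len b < κ.ord)

lemma graftCode_T (hκ : ℵ₀ < κ) : (graftCode (code := code) (len := len) (D := D) hlen hκ).T
    = GTree code len D := rfl

lemma graftCode_h (hκ : ℵ₀ < κ) : (graftCode (code := code) (len := len) (D := D) hlen hκ).h
    = Gh code len D := rfl

variable (hval : ∀ b, IsLeaf code.T b → ∀ s, code.h b = BLabel.leaf s →
  ∀ x, (IIWinsBStar (D b) x ↔ x ∈ s))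

include hlen hval

lemma wins_graft_of_wins (hκ : ℵ₀ < κ) (x : Z) (hwin : IIWinsBStar code x) :
    IIWinsBStar (graftCode (code := code) (len := len) (D := D) hlen hκ) x := by
  classical
  obtain ⟨σ, hu, hl⟩ := hwin
  set σD : PreSeq κ → PreSeq κ → PreSeq κ :=
    fun b => if h : IIWinsBStar (D b) x then h.choose else id with hσD
  have hσD1 : ∀ b, IIWinsBStar (D b) x → ∀ g, Reach (D b) (σD b) g →
      (D b).h g = BLabel.union → ImmSucc (D b).T g (σD b g) := by
    intro b hb
    have he : σD b = hb.choose := by rw [hσD]; exact dif_pos hb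
    rw [he]
    exact hb.choose_spec.1
  have hσD2 : ∀ b, IIWinsBStar (D b) x → ∀ g s, Reach (D b) (σD b) g →
      (D b).h g = BLabel.leaf s → x ∈ s := by
    intro b hb
    have he : σD b = hb.choose := by rw [hσD]; exact dif_pos hb
    rw [he]
    exact hb.choose_spec.2
  set σ' : PreSeq κ → PreSeq κ := fun p =>
    if hp : InGraft code len D p then
      conc (len hp.choose) hp.choose (σD hp.choose (strip (len hp.choose) p))
    else σ p with hσ'
  have hσ'graft : ∀ b g, IsLeaf code.T b → g ∈ (D b).T →
      σ' (conc (len b) b g) = conc (len b) b (σD b g) := by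
    intro b g hb hg
    have hp : InGraft code len D (conc (len b) b g) := ⟨b, hb, g, hg, rfl⟩
    rw [hσ']
    dsimp only
    rw [dif_pos hp]
    obtain ⟨hb', g', hg', heq⟩ := hp.choose_spec
    have hbb : hp.choose = b := (decomp_b_unique hlen hb hb' heq).symm
    rw [hbb, strip_conc]
  have hσ'base : ∀ p, p ∈ code.T → ¬ IsLeaf code.T p → σ' p = σ p := by
    intro p hp hnl
    rw [hσ']
    exact dif_neg (not_inGraft hlen hp hnl)
  have hWb : ∀ b, IsLeaf code.T b → Reach code σ b → IIWinsBStar (D b) x := by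
    intro b hb hr
    obtain ⟨s, hs, hlab⟩ := code.label_leaf b hb.1 hb
    exact (hval b hb s hlab x).2 (hl b s hr hlab)
  have Qof : ∀ q, q ∈ code.T → Reach code σ q →
      (q ∈ code.T ∧ ¬ IsLeaf code.T q ∧ Reach code σ q) ∨
      (∃ b g, IsLeaf code.T b ∧ Reach code σ b ∧ g ∈ (D b).T ∧
        Reach (D b) (σD b) g ∧ q = conc (len b) b g) := by
    intro q hq hr
    by_cases hql : IsLeaf code.T q
    · exact Or.inr ⟨q, seqRoot κ, hql, hr, (D q).root_mem, Reach.root,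
        (conc_root (hlen q hq).1).symm⟩
    · exact Or.inl ⟨hq, hql, hr⟩
  have key : ∀ p, Reach (graftCode (code := code) (len := len) (D := D) hlen hκ) σ' p →
      (p ∈ code.T ∧ ¬ IsLeaf code.T p ∧ Reach code σ p) ∨
      (∃ b g, IsLeaf code.T b ∧ Reach code σ b ∧ g ∈ (D b).T ∧
        Reach (D b) (σD b) g ∧ p = conc (len b) b g) := by
    intro p hp
    induction hp with
    | root => exact Qof _ code.root_mem Reach.root
    | inter p q hr hlab hsucc ih =>
      rcases ih with ⟨hpT, hpl, hpr⟩ | ⟨b, g, hb, hbr, hg, hgr, rfl⟩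
      · have hlab' : code.h p = BLabel.inter := by
          rwa [graftCode_h, Gh_base hlen hpT hpl] at hlab
        obtain ⟨hqT, hsucc'⟩ := immSucc_base_of_GT hlen hpT hpl hsucc
        exact Qof q hqT (Reach.inter p q hpr hlab' hsucc')
      · have hlab' : (D b).h g = BLabel.inter := by
          rwa [graftCode_h, Gh_graft hlen hb hg] at hlab
        obtain ⟨g', hsucc', rfl⟩ := immSucc_graft_of_GT hlen hb hg hsucc
        exact Or.inr ⟨b, g', hb, hbr, hsucc'.1, Reach.inter g g' hgr hlab' hsucc', rfl⟩
    | union p hr hlab ih =>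
      rcases ih with ⟨hpT, hpl, hpr⟩ | ⟨b, g, hb, hbr, hg, hgr, rfl⟩
      · have hlab' : code.h p = BLabel.union := by
          rwa [graftCode_h, Gh_base hlen hpT hpl] at hlab
        rw [hσ'base p hpT hpl]
        exact Qof (σ p) (hu p hpr hlab').1 (Reach.union p hpr hlab')
      · have hlab' : (D b).h g = BLabel.union := by
          rwa [graftCode_h, Gh_graft hlen hb hg] at hlab
        rw [hσ'graft b g hb hg]
        have h1 : ImmSucc (D b).T g (σD b g) := hσD1 b (hWb b hb hbr) g hgr hlab'
        exact Or.inr ⟨b, σD b g, hb, hbr, h1.1, Reach.union g hgr hlab', rfl⟩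
    | lim c hne hch hr ih =>
      by_cases hall : ∀ p ∈ c, p ∈ code.T ∧ ¬ IsLeaf code.T p ∧ Reach code σ p
      · have hsub : c ⊆ code.T := fun p hp => (hall p hp).1
        exact Qof _ (code.chain_sup c hsub hne hch)
          (Reach.lim c hne hch (fun p hp => (hall p hp).2.2))
      · push_neg at hall
        obtain ⟨p0, hp0c, hnp⟩ := hall
        have hsecond : ∀ p ∈ c,
            (p ∈ code.T ∧ ¬ IsLeaf code.T p ∧ Reach code σ p) ∨
            (∃ b g, IsLeaf code.T b ∧ Reach code σ b ∧ g ∈ (D b).T ∧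
              Reach (D b) (σD b) g ∧ p = conc (len b) b g) := ih
        have h2 : ∃ b g, IsLeaf code.T b ∧ Reach code σ b ∧ g ∈ (D b).T ∧
            Reach (D b) (σD b) g ∧ p0 = conc (len b) b g := by
          rcases hsecond p0 hp0c with h | h
          · exact absurd h.2.2 (hnp h.1 h.2.1)
          · exact h
        obtain ⟨b, g0, hb, hbr, hg0, hg0r, heq⟩ := h2
        have hcG : c ⊆ GTree code len D := by
          intro p hp
          rcases hsecond p hp with ⟨hT, -, -⟩ | ⟨b', g', hb', -, hg', -, rfl⟩
          · exact Or.inl hT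
          · exact mem_GT_of_graft hlen hb' hg'
        have hble : seqLE b p0 := by
          rw [heq]; exact le_conc_of_leaf hlen hb.1 g0
        obtain ⟨d, hdT, hdne, hdch, hsup, hdc⟩ :=
          chain_sup_structure hlen hb hcG hch hp0c hble
        have hdr : ∀ g ∈ d, Reach (D b) (σD b) g := by
          intro g hg
          rcases hsecond (conc (len b) b g) (hdc g hg) with ⟨hT, hnl, -⟩ |
            ⟨b', g', hb', -, hg', hgr', heq'⟩
          · exact absurd ((hb.2 _ hT (le_conc_of_leaf hlen hb.1 g)).symm ▸ hb) hnl
          · have hbb : b = b' := decomp_b_unique hlen hb hb' heq'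
            subst hbb
            have : g = g' := conc_inj heq'
            subst this
            exact hgr'
        rw [hsup]
        exact Or.inr ⟨b, seqSup d, hb, hbr, (D b).chain_sup d hdT hdne hdch,
          Reach.lim d hdne hdch hdr, rfl⟩
  refine ⟨σ', ?_, ?_⟩
  · intro p hr hlab
    rcases key p hr with ⟨hpT, hpl, hpr⟩ | ⟨b, g, hb, hbr, hg, hgr, rfl⟩
    · have hlab' : code.h p = BLabel.union := by
        rwa [graftCode_h, Gh_base hlen hpT hpl] at hlab
      rw [hσ'base p hpT hpl, graftCode_T]
      exact immSucc_GT_of_base hlen (hu p hpr hlab')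
    · have hlab' : (D b).h g = BLabel.union := by
        rwa [graftCode_h, Gh_graft hlen hb hg] at hlab
      rw [hσ'graft b g hb hg, graftCode_T]
      exact immSucc_GT_graft hlen hb (hσD1 b (hWb b hb hbr) g hgr hlab')
  · intro p s hr hlab
    rcases key p hr with ⟨hpT, hpl, hpr⟩ | ⟨b, g, hb, hbr, hg, hgr, rfl⟩
    · have hlab' : code.h p = BLabel.leaf s := by
        rwa [graftCode_h, Gh_base hlen hpT hpl] at hlab
      rcases code.label_node p hpT hpl with h | h <;>
        · have := h.symm.trans hlab'
          simp at this
    · have hlab' : (D b).h g = BLabel.leaf s := by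
        rwa [graftCode_h, Gh_graft hlen hb hg] at hlab
      exact hσD2 b (hWb b hb hbr) g s hgr hlab'

lemma wins_of_graft_wins (hκ : ℵ₀ < κ) (x : Z)
    (hwin : IIWinsBStar (graftCode (code := code) (len := len) (D := D) hlen hκ) x) :
    IIWinsBStar code x := by
  classical
  obtain ⟨σ', hu', hl'⟩ := hwin
  have keyA : ∀ p, Reach code σ' p →
      Reach (graftCode (code := code) (len := len) (D := D) hlen hκ) σ' p ∧ p ∈ code.T := by
    intro p hp
    induction hp with
    | root => exact ⟨Reach.root, code.root_mem⟩
    | inter p q hr hlab hsucc ih =>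
      have hpl : ¬ IsLeaf code.T p := by
        intro hpl
        obtain ⟨s, hs, h⟩ := code.label_leaf p ih.2 hpl
        have := h.symm.trans hlab
        simp at this
      have hlabG : (graftCode (code := code) (len := len) (D := D) hlen hκ).h p
          = BLabel.inter := by
        rw [graftCode_h, Gh_base hlen ih.2 hpl]; exact hlab
      exact ⟨Reach.inter p q ih.1 hlabG (immSucc_GT_of_base hlen hsucc), hsucc.1⟩
    | union p hr hlab ih =>
      have hpl : ¬ IsLeaf code.T p := by
        intro hpl
        obtain ⟨s, hs, h⟩ := code.label_leaf p ih.2 hpl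
        have := h.symm.trans hlab
        simp at this
      have hlabG : (graftCode (code := code) (len := len) (D := D) hlen hκ).h p
          = BLabel.union := by
        rw [graftCode_h, Gh_base hlen ih.2 hpl]; exact hlab
      have himm := hu' p ih.1 hlabG
      exact ⟨Reach.union p ih.1 hlabG, (immSucc_base_of_GT hlen ih.2 hpl himm).1⟩
    | lim c hne hch hr ih =>
      exact ⟨Reach.lim c hne hch (fun p hp => (ih p hp).1),
        code.chain_sup c (fun p hp => (ih p hp).2) hne hch⟩
  refine ⟨σ', ?_, ?_⟩
  · intro p hr hlab
    have hpl : ¬ IsLeaf code.T p := by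
      intro hpl
      obtain ⟨s, hs, h⟩ := code.label_leaf p (keyA p hr).2 hpl
      have := h.symm.trans hlab
      simp at this
    have hlabG : (graftCode (code := code) (len := len) (D := D) hlen hκ).h p
        = BLabel.union := by
      rw [graftCode_h, Gh_base hlen (keyA p hr).2 hpl]; exact hlab
    exact (immSucc_base_of_GT hlen (keyA p hr).2 hpl (hu' p (keyA p hr).1 hlabG)).2
  · intro p s hr hlab
    obtain ⟨hrG, hpT⟩ := keyA p hr
    have hpl : IsLeaf code.T p := by
      by_contra hpl
      rcases code.label_node p hpT hpl with h | h <;>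
        · have := h.symm.trans hlab
          simp at this
    apply (hval p hpl s hlab x).1
    set τ : PreSeq κ → PreSeq κ := fun g => strip (len p) (σ' (conc (len p) p g)) with hτ
    have keyB : ∀ g, Reach (D p) τ g →
        Reach (graftCode (code := code) (len := len) (D := D) hlen hκ) σ' (conc (len p) p g)
          ∧ g ∈ (D p).T := by
      intro g hg
      induction hg with
      | root => rw [conc_root (hlen p hpT).1]; exact ⟨hrG, (D p).root_mem⟩
      | inter g q hgr hglab hgsucc ih =>
        have hlabG : (graftCode (code := code) (len := len) (D := D) hlen hκ).h
            (conc (len p) p g) = BLabel.inter := by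
          rw [graftCode_h, Gh_graft hlen hpl ih.2]; exact hglab
        exact ⟨Reach.inter _ _ ih.1 hlabG (immSucc_GT_graft hlen hpl hgsucc), hgsucc.1⟩
      | union g hgr hglab ih =>
        have hlabG : (graftCode (code := code) (len := len) (D := D) hlen hκ).h
            (conc (len p) p g) = BLabel.union := by
          rw [graftCode_h, Gh_graft hlen hpl ih.2]; exact hglab
        have hrG2 := Reach.union _ ih.1 hlabG
        have himm := hu' _ ih.1 hlabG
        obtain ⟨g2, hsucc2, heq2⟩ := immSucc_graft_of_GT hlen hpl ih.2 himm
        have hτg : τ g = g2 := by rw [hτ]; dsimp only; rw [heq2, strip_conc]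
        constructor
        · rw [hτg, ← heq2]; exact hrG2
        · rw [hτg]; exact hsucc2.1
      | lim c hne hch hgr ih =>
        constructor
        · rw [← seqSup_conc (hlen p hpT).1 hne hch]
          exact Reach.lim _ (hne.image _) (isChain_conc_image p hch)
            (by rintro - ⟨g, hg, rfl⟩; exact (ih g hg).1)
        · exact (D p).chain_sup c (fun g hg => (ih g hg).2) hne hch
    refine ⟨τ, ?_, ?_⟩
    · intro g hgr hglab
      have hlabG : (graftCode (code := code) (len := len) (D := D) hlen hκ).h
          (conc (len p) p g) = BLabel.union := by
        rw [graftCode_h, Gh_graft hlen hpl (keyB g hgr).2]; exact hglab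
      have himm := hu' _ (keyB g hgr).1 hlabG
      obtain ⟨g2, hsucc2, heq2⟩ := immSucc_graft_of_GT hlen hpl (keyB g hgr).2 himm
      have hτg : τ g = g2 := by rw [hτ]; dsimp only; rw [heq2, strip_conc]
      rw [hτg]
      exact hsucc2
    · intro g s' hgr hglab
      have hlabG : (graftCode (code := code) (len := len) (D := D) hlen hκ).h
          (conc (len p) p g) = BLabel.leaf s' := by
        rw [graftCode_h, Gh_graft hlen hpl (keyB g hgr).2]; exact hglab
      exact hl' _ s' (keyB g hgr).1 hlabG

end graft4

section borelToStar
variable {κ : Cardinal.{0}}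

/-- The key grafting lemma: if each leaf label of a code is itself `Borel*` with respect
to `Basic'`, then the value of the code is `Borel*` with respect to `Basic'`. -/
lemma isBorelStar_of_code (hκ : ℵ₀ < κ) {Z : Type 1} {Basic Basic' : Set (Set Z)}
    (hs0 : Basic'.Nonempty)
    (hB : ∀ s ∈ Basic, IsBorelStar κ Basic' s) (code : BorelStarCode κ Z Basic) :
    IsBorelStar κ Basic' {x | IIWinsBStar code x} := by
  classical
  obtain ⟨s0, hs0mem⟩ := hs0
  set len : PreSeq κ → Ordinal := fun b => if h : IsSeq κ b then h.choose else 0 with hlendef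
  have hlen : ∀ b ∈ code.T, SeqLen b (len b) ∧ len b < κ.ord := by
    intro b hb
    have h : IsSeq κ b := code.mem_isSeq b hb
    have he : len b = h.choose := by rw [hlendef]; exact dif_pos h
    rw [he]
    obtain ⟨h1, h2⟩ := h.choose_spec
    exact ⟨h2, h1⟩
  have hDex : ∀ b : PreSeq κ, ∃ Dc : BorelStarCode κ Z Basic',
      IsLeaf code.T b → ∀ s, code.h b = BLabel.leaf s →
        ∀ x, (IIWinsBStar Dc x ↔ x ∈ s) := by
    intro b
    by_cases hb : IsLeaf code.T b
    · obtain ⟨s, hs, hlab⟩ := code.label_leaf b hb.1 hb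
      obtain ⟨Dc, hDc⟩ := hB s hs
      refine ⟨Dc, fun _ s' hlab' x => ?_⟩
      have hss : s = s' := by
        have := hlab.symm.trans hlab'
        cases this; rfl
      subst hss
      constructor
      · intro h; rw [hDc]; exact h
      · intro h; rw [hDc] at h; exact h
    · exact ⟨singletonCode hκ hs0mem, fun hb' => absurd hb' hb⟩
  set D : PreSeq κ → BorelStarCode κ Z Basic' := fun b => (hDex b).choose with hDdef
  have hval : ∀ b, IsLeaf code.T b → ∀ s, code.h b = BLabel.leaf s →
      ∀ x, (IIWinsBStar (D b) x ↔ x ∈ s) := fun b => (hDex b).choose_spec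
  refine ⟨graftCode (code := code) (len := len) (D := D) hlen hκ, ?_⟩
  ext x
  simp only [Set.mem_setOf_eq]
  exact ⟨fun h => wins_graft_of_wins hlen hval hκ x h,
    fun h => wins_of_graft_wins hlen hval hκ x h⟩

lemma exists_embedding_O {ι : Type} (hι : Cardinal.mk ι ≤ κ) : Nonempty (ι ↪ O κ) := by
  have h1 : Cardinal.lift.{1} (Cardinal.mk ι) ≤ Cardinal.lift.{0} (Cardinal.mk (O κ)) := by
    rw [Ordinal.mk_Iio_ordinal, Cardinal.card_ord, Cardinal.lift_uzero]
    exact Cardinal.lift_le.2 hι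
  exact Cardinal.lift_mk_le'.1 h1

lemma univ_basicOpen (hκ : ℵ₀ < κ) : (Set.univ : Set (Point κ)) ∈ basicOpens κ := by
  refine ⟨0, zero_lt_ord hκ, fun _ => true, ?_⟩
  · ext η
    simp only [Set.mem_univ, true_iff, basicOpen, Set.mem_setOf_eq]
    intro γ hγ
    exact absurd hγ (not_lt_zero)

lemma isBorelStar_of_isKBorel (hκ : ℵ₀ < κ) {A : Set (Point κ)} (hA : IsKBorel κ A) :
    IsBorelStar κ (basicOpens κ) A := by
  induction hA with
  | basic s hs =>
    refine ⟨singletonCode hκ hs, ?_⟩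
    ext x
    exact (value_singletonCode hκ hs x).symm
  | iUnion ι hι A hA ih =>
    by_cases hne : Nonempty ι
    · obtain ⟨e⟩ := exists_embedding_O hι
      have := isBorelStar_of_code (Basic := Set.range A) hκ ⟨_, univ_basicOpen hκ⟩
        (by rintro s ⟨i, rfl⟩; exact ih i) (fanCode hκ hι e A true)
      convert this using 1
      ext x
      simp only [Set.mem_iUnion, Set.mem_setOf_eq]
      exact (value_fan_union hκ hι x).symm
    · haveI := not_nonempty_iff.1 hne
      rw [Set.iUnion_of_empty A]
      -- ∅ as the intersection of two incompatible basic open sets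
      have e : Bool ↪ O κ :=
        ⟨fun b => if b then ⟨1, one_lt_ord hκ⟩ else ⟨0, zero_lt_ord hκ⟩, by
          intro a b hab
          cases a <;> cases b <;> simp_all [Subtype.ext_iff]⟩
      set S : Bool → Set (Point κ) := fun b => basicOpen κ 1 (fun _ => b) with hS
      have hSb : ∀ b, S b ∈ basicOpens κ := fun b => ⟨1, one_lt_ord hκ, fun _ => b, rfl⟩
      have hBool : Cardinal.mk Bool ≤ κ :=
        (Cardinal.lt_aleph0_of_finite Bool).le.trans hκ.le
      have := isBorelStar_of_code (Basic := Set.range S) hκ ⟨_, univ_basicOpen hκ⟩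
        (by rintro s ⟨b, rfl⟩; exact ⟨singletonCode hκ (hSb b), by
          ext x; exact (value_singletonCode hκ (hSb b) x).symm⟩)
        (fanCode hκ hBool e S false)
      convert this using 1
      ext x
      simp only [Set.mem_empty_iff_false, Set.mem_setOf_eq, false_iff]
      rw [value_fan_inter hκ hBool x]
      intro hall
      have h0 := hall false ⟨0, zero_lt_ord hκ⟩ (by simpa using Ordinal.zero_lt_one)
      have h1 := hall true ⟨0, zero_lt_ord hκ⟩ (by simpa using Ordinal.zero_lt_one)
      rw [h0] at h1
      exact Bool.noConfusion h1
  | iInter ι hι A hA ih =>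
    by_cases hne : Nonempty ι
    · obtain ⟨e⟩ := exists_embedding_O hι
      have := isBorelStar_of_code (Basic := Set.range A) hκ ⟨_, univ_basicOpen hκ⟩
        (by rintro s ⟨i, rfl⟩; exact ih i) (fanCode hκ hι e A false)
      convert this using 1
      ext x
      simp only [Set.mem_iInter, Set.mem_setOf_eq]
      exact (value_fan_inter hκ hι x).symm
    · haveI := not_nonempty_iff.1 hne
      rw [Set.iInter_of_empty A]
      refine ⟨singletonCode hκ (univ_basicOpen hκ), ?_⟩
      ext x
      exact (value_singletonCode hκ (univ_basicOpen hκ) x).symm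

end borelToStar

section preimage
variable {κ : Cardinal.{0}} {Z W : Type 1} {Basic : Set (Set Z)}

/-- relabel a code by taking preimages of the leaf labels -/
def preimageCode (code : BorelStarCode κ Z Basic) (f : W → Z) :
    BorelStarCode κ W ((fun s => f ⁻¹' s) '' Basic) where
  T := code.T
  h := fun x => match code.h x with
    | BLabel.inter => BLabel.inter
    | BLabel.union => BLabel.union
    | BLabel.leaf s => BLabel.leaf (f ⁻¹' s)
  mem_isSeq := code.mem_isSeq
  root_mem := code.root_mem
  downward := code.downward
  card_le := code.card_le
  no_long_chain := code.no_long_chain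
  chain_sup := code.chain_sup
  label_leaf := by
    intro p hp hleaf
    obtain ⟨s, hs, hlab⟩ := code.label_leaf p hp hleaf
    exact ⟨f ⁻¹' s, ⟨s, hs, rfl⟩, by rw [hlab]⟩
  label_node := by
    intro p hp hnl
    rcases code.label_node p hp hnl with hlab | hlab
    · exact Or.inl (by rw [hlab])
    · exact Or.inr (by rw [hlab])

variable {code : BorelStarCode κ Z Basic} {f : W → Z}

lemma preimageCode_h_inter {p : PreSeq κ} :
    (preimageCode code f).h p = BLabel.inter ↔ code.h p = BLabel.inter := by
  show (match code.h p with
    | BLabel.inter => BLabel.inter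
    | BLabel.union => BLabel.union
    | BLabel.leaf s => BLabel.leaf (f ⁻¹' s)) = BLabel.inter ↔ _
  cases code.h p <;> simp

lemma preimageCode_h_union {p : PreSeq κ} :
    (preimageCode code f).h p = BLabel.union ↔ code.h p = BLabel.union := by
  show (match code.h p with
    | BLabel.inter => BLabel.inter
    | BLabel.union => BLabel.union
    | BLabel.leaf s => BLabel.leaf (f ⁻¹' s)) = BLabel.union ↔ _
  cases code.h p <;> simp

lemma preimageCode_h_leaf {p : PreSeq κ} {t : Set W} :
    (preimageCode code f).h p = BLabel.leaf t ↔ ∃ s, code.h p = BLabel.leaf s ∧ t = f ⁻¹' s := by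
  show (match code.h p with
    | BLabel.inter => BLabel.inter
    | BLabel.union => BLabel.union
    | BLabel.leaf s => BLabel.leaf (f ⁻¹' s)) = BLabel.leaf t ↔ _
  cases code.h p with
  | inter => simp
  | union => simp
  | leaf s =>
    simp only [BLabel.leaf.injEq]
    constructor
    · intro h; exact ⟨s, rfl, h.symm⟩
    · rintro ⟨s', hs', rfl⟩
      cases hs'; rfl

lemma reach_preimageCode {σ : PreSeq κ → PreSeq κ} {p : PreSeq κ} :
    Reach (preimageCode code f) σ p ↔ Reach code σ p := by
  constructor
  · intro h
    induction h with
    | root => exact Reach.root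
    | inter p q hr hlab hsucc ih => exact Reach.inter p q ih (preimageCode_h_inter.1 hlab) hsucc
    | union p hr hlab ih => exact Reach.union p ih (preimageCode_h_union.1 hlab)
    | lim c hne hch hr ih => exact Reach.lim c hne hch ih
  · intro h
    induction h with
    | root => exact Reach.root
    | inter p q hr hlab hsucc ih => exact Reach.inter p q ih (preimageCode_h_inter.2 hlab) hsucc
    | union p hr hlab ih => exact Reach.union p ih (preimageCode_h_union.2 hlab)
    | lim c hne hch hr ih => exact Reach.lim c hne hch ih

lemma value_preimageCode (x : W) :
    IIWinsBStar (preimageCode code f) x ↔ IIWinsBStar code (f x) := by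
  constructor
  · rintro ⟨σ, hu, hl⟩
    refine ⟨σ, ?_, ?_⟩
    · intro p hr hlab
      exact hu p (reach_preimageCode.2 hr) (preimageCode_h_union.2 hlab)
    · intro p s hr hlab
      have := hl p (f ⁻¹' s) (reach_preimageCode.2 hr)
        (preimageCode_h_leaf.2 ⟨s, hlab, rfl⟩)
      exact this
  · rintro ⟨σ, hu, hl⟩
    refine ⟨σ, ?_, ?_⟩
    · intro p hr hlab
      exact hu p (reach_preimageCode.1 hr) (preimageCode_h_union.1 hlab)
    · intro p t hr hlab
      obtain ⟨s, hs, rfl⟩ := preimageCode_h_leaf.1 hlab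
      exact hl p s (reach_preimageCode.1 hr) hs

end preimage

/-- Claim in the proof of Theorem 3.5. If `f : 2^κ → 2^κ` is a Borel
function and `B ⊆ 2^κ` is a `Borel*` set, then `f⁻¹[B]` is a `Borel*` set. -/
theorem isBorelStar_preimage (κ : Cardinal.{0}) (hκ₁ : ℵ₀ < κ) (hκ₂ : κ ^< κ = κ)
    (f : Point κ → Point κ) (hf : IsBorelFun κ f)
    (B : Set (Point κ)) (hB : IsBorelStar κ (basicOpens κ) B) :
    IsBorelStar κ (basicOpens κ) (f ⁻¹' B) := by
  obtain ⟨codeB, rfl⟩ := hB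
  have hpre : ∀ t ∈ (fun s => f ⁻¹' s) '' basicOpens κ, IsBorelStar κ (basicOpens κ) t := by
    rintro t ⟨s, hs, rfl⟩
    apply isBorelStar_of_isKBorel hκ₁
    apply hf
    exact TopologicalSpace.isOpen_generateFrom_of_mem hs
  have := isBorelStar_of_code hκ₁ ⟨_, univ_basicOpen hκ₁⟩ hpre (preimageCode codeB f)
  convert this using 1
  ext x
  simp only [Set.mem_preimage, Set.mem_setOf_eq]
  exact (value_preimageCode x).symm

end GenCantor
end
end
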